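/- arXiv:1803.02513 — 4 statements merged into one kernel-verified Lean document; each statement's English description precedes it below -/
import Mathlib

section
/- Let 0 < a < b < ∞, let f and g be continuous functions on [a,b] with g(t) > 0 for all t ∈ [a,b], and define F(x) = ∫_a^b f(t)·e^{−xt} dt and G(x) = ∫_a^b g(t)·e^{−xt} dt for x > 0. Suppose there exists t* ∈ (a,b) such that f/g is strictly increasing on [a,t*] and strictly decreasing on [t*,b], and suppose the limit L = lim_{x→0⁺} ( (F′(x)/G′(x))·G(x) − F(x) ) exists. Then the ratio x ↦ F(x)/G(x) is decreasing on (0,∞) if and only if L ≥ 0. -/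
open Real Filter Set MeasureTheory Topology

open intervalIntegral


noncomputable def lap (a b : ℝ) (h : ℝ → ℝ) (x : ℝ) : ℝ := ∫ t in a..b, h t * Real.exp (-x * t)

lemma lap_intble (a b : ℝ) (hab : a ≤ b) (h : ℝ → ℝ) (hh : ContinuousOn h (Icc a b)) (x : ℝ) :
    IntervalIntegrable (fun t => h t * Real.exp (-x * t)) volume a b := by
  apply ContinuousOn.intervalIntegrable
  rw [uIcc_of_le hab]
  exact hh.mul (Continuous.continuousOn (by fun_prop))

lemma lap_hasDerivAt (a b : ℝ) (hab : a ≤ b) (h : ℝ → ℝ) (hh : ContinuousOn h (Icc a b)) (x₀ : ℝ) :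
    HasDerivAt (lap a b h) (-(lap a b (fun t => t * h t) x₀)) x₀ := by
  obtain ⟨C, hC⟩ := IsCompact.exists_bound_of_continuousOn isCompact_Icc hh
  set B : ℝ := |a| + |b| with hB
  have htB : ∀ t ∈ uIoc a b, |t| ≤ B := by
    intro t ht
    rw [uIoc_of_le hab] at ht
    rw [abs_le]
    constructor
    · nlinarith [ht.1, abs_nonneg a, abs_nonneg b, neg_abs_le a, le_abs_self b]
    · nlinarith [ht.2, abs_nonneg a, abs_nonneg b, le_abs_self b]
  have key := intervalIntegral.hasDerivAt_integral_of_dominated_loc_of_deriv_le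
    (F := fun x t => h t * Real.exp (-x * t))
    (F' := fun x t => h t * (Real.exp (-x * t) * (-t)))
    (x₀ := x₀) (a := a) (b := b) (μ := volume)
    (bound := fun _ => C * (Real.exp ((|x₀| + 1) * B) * B))
    (Metric.ball_mem_nhds x₀ one_pos)
    (Eventually.of_forall fun x => by
      apply ContinuousOn.aestronglyMeasurable _ measurableSet_uIoc
      exact (hh.mono (by rw [uIoc_of_le hab]; exact Ioc_subset_Icc_self)).mul
        (Continuous.continuousOn (by fun_prop)))
    (lap_intble a b hab h hh x₀)
    (by
      apply ContinuousOn.aestronglyMeasurable _ measurableSet_uIoc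
      exact (hh.mono (by rw [uIoc_of_le hab]; exact Ioc_subset_Icc_self)).mul
        (Continuous.continuousOn (by fun_prop)))
    (Eventually.of_forall (fun t => by
      intro ht x hx
      have h1 : |h t| ≤ C := by
        have := hC t (by rw [uIoc_of_le hab] at ht; exact ⟨le_of_lt ht.1, ht.2⟩)
        simpa using this
      have h2 : |t| ≤ B := htB t ht
      have h3 : Real.exp (-x * t) ≤ Real.exp ((|x₀| + 1) * B) := by
        apply Real.exp_le_exp.2
        have hxb : |x| ≤ |x₀| + 1 := by
          have := mem_ball_iff_norm.1 hx
          have : |x - x₀| < 1 := by simpa using this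
          calc |x| ≤ |x - x₀| + |x₀| := by
                have := abs_sub_abs_le_abs_sub x x₀; linarith [abs_sub_abs_le_abs_sub x x₀]
            _ ≤ |x₀| + 1 := by linarith
        calc -x * t ≤ |(-x) * t| := le_abs_self _
          _ = |x| * |t| := by rw [abs_mul, abs_neg]
          _ ≤ (|x₀| + 1) * B := by
              apply mul_le_mul hxb h2 (abs_nonneg t); positivity
      have hC0 : 0 ≤ C := le_trans (abs_nonneg _) h1
      calc ‖h t * (Real.exp (-x * t) * (-t))‖ = |h t| * (Real.exp (-x * t) * |t|) := by
            rw [norm_mul, norm_mul]; simp [abs_of_pos (Real.exp_pos _), Real.norm_eq_abs]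
        _ ≤ C * (Real.exp ((|x₀| + 1) * B) * B) := by
            apply mul_le_mul h1 _ (by positivity) hC0
            apply mul_le_mul h3 h2 (abs_nonneg t) (le_of_lt (Real.exp_pos _))))
    (intervalIntegrable_const)
    (Eventually.of_forall (fun t => by
      intro _ x _
      have h1 : HasDerivAt (fun x : ℝ => -x * t) (-t) x := by
        simpa using ((hasDerivAt_id x).neg.mul_const t)
      exact (h1.exp).const_mul (h t)))
  have h2 := key.2
  have : (∫ t in a..b, h t * (Real.exp (-x₀ * t) * (-t))) = -(lap a b (fun t => t * h t) x₀) := by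
    rw [show -(lap a b (fun t => t * h t) x₀) = ∫ t in a..b, -(t * h t * Real.exp (-x₀ * t)) by
      rw [intervalIntegral.integral_neg]; rfl]
    apply intervalIntegral.integral_congr
    intro t _
    ring
  rw [this] at h2
  exact h2

lemma lap_pos (a b : ℝ) (hab : a < b) (h : ℝ → ℝ) (hh : ContinuousOn h (Icc a b))
    (hpos : ∀ t ∈ Icc a b, 0 < h t) (x : ℝ) : 0 < lap a b h x := by
  apply intervalIntegral_pos_of_pos_on (lap_intble a b hab.le h hh x) _ hab
  intro t ht
  exact mul_pos (hpos t ⟨ht.1.le, ht.2.le⟩) (Real.exp_pos _)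

lemma intble_pos_pt (a b : ℝ) (hab : a < b) (h : ℝ → ℝ) (hh : ContinuousOn h (Icc a b))
    (hnn : ∀ t ∈ Icc a b, 0 ≤ h t) (t₀ : ℝ) (ht₀ : t₀ ∈ Ioo a b) (hpt : 0 < h t₀) :
    0 < ∫ t in a..b, h t := by
  have hi : IntervalIntegrable h volume a b := by
    apply ContinuousOn.intervalIntegrable; rwa [uIcc_of_le hab.le]
  have hca : ContinuousAt h t₀ := hh.continuousAt (Icc_mem_nhds ht₀.1 ht₀.2)
  have hev : ∀ᶠ t in 𝓝 t₀, h t₀ / 2 < h t := hca.eventually_const_lt (by linarith)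
  obtain ⟨δ, hδ, hball⟩ := Metric.eventually_nhds_iff.1 hev
  set u : ℝ := max a (t₀ - δ / 2) with hu
  set v : ℝ := min b (t₀ + δ / 2) with hv
  have hau : a ≤ u := le_max_left _ _
  have huv : u < t₀ := max_lt ht₀.1 (by linarith)
  have hvv : t₀ < v := lt_min ht₀.2 (by linarith)
  have hvb : v ≤ b := min_le_left _ _
  have i1 : IntervalIntegrable h volume a u := hi.mono_set (by
    rw [uIcc_of_le hau, uIcc_of_le hab.le]
    exact Icc_subset_Icc le_rfl (le_trans huv.le (le_trans hvv.le hvb)))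
  have i2 : IntervalIntegrable h volume u v := hi.mono_set (by
    rw [uIcc_of_le (le_trans huv.le hvv.le), uIcc_of_le hab.le]
    exact Icc_subset_Icc hau hvb)
  have i3 : IntervalIntegrable h volume v b := hi.mono_set (by
    rw [uIcc_of_le hvb, uIcc_of_le hab.le]
    exact Icc_subset_Icc (le_trans hau (le_trans huv.le hvv.le)) le_rfl)
  have e1 : (∫ t in a..b, h t) = (∫ t in a..u, h t) + (∫ t in u..v, h t) + (∫ t in v..b, h t) := by
    rw [integral_add_adjacent_intervals i1 i2, integral_add_adjacent_intervals (i1.trans i2) i3]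
  have p1 : 0 ≤ ∫ t in a..u, h t := by
    apply intervalIntegral.integral_nonneg hau
    intro t ht
    exact hnn t ⟨ht.1, le_trans ht.2 (le_trans huv.le (le_trans hvv.le hvb))⟩
  have p3 : 0 ≤ ∫ t in v..b, h t := by
    apply intervalIntegral.integral_nonneg hvb
    intro t ht
    exact hnn t ⟨le_trans (le_trans hau (le_trans huv.le hvv.le)) ht.1, ht.2⟩
  have p2 : 0 < ∫ t in u..v, h t := by
    apply intervalIntegral_pos_of_pos_on i2 _ (lt_trans huv hvv)
    intro t ht
    have : dist t t₀ < δ := by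
      rw [Real.dist_eq, abs_lt]
      constructor
      · have : t₀ - δ / 2 ≤ u := le_max_right _ _
        have := ht.1; nlinarith
      · have : v ≤ t₀ + δ / 2 := min_le_right _ _
        have := ht.2; nlinarith
    linarith [hball this]
  linarith

lemma lap_comb (a b : ℝ) (hab : a ≤ b) (h₁ h₂ h₃ k : ℝ → ℝ)
    (hc₁ : ContinuousOn h₁ (Icc a b)) (hc₂ : ContinuousOn h₂ (Icc a b))
    (hc₃ : ContinuousOn h₃ (Icc a b))
    (c₁ c₂ c₃ : ℝ) (x : ℝ) (H : ∀ t ∈ Icc a b, k t = c₁ * h₁ t + c₂ * h₂ t + c₃ * h₃ t) :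
    lap a b k x = c₁ * lap a b h₁ x + c₂ * lap a b h₂ x + c₃ * lap a b h₃ x := by
  have e₁ := (lap_intble a b hab h₁ hc₁ x).const_mul c₁
  have e₂ := (lap_intble a b hab h₂ hc₂ x).const_mul c₂
  have e₃ := (lap_intble a b hab h₃ hc₃ x).const_mul c₃
  have step : lap a b k x = ∫ t in a..b,
      (c₁ * (h₁ t * Real.exp (-x * t)) + c₂ * (h₂ t * Real.exp (-x * t))
        + c₃ * (h₃ t * Real.exp (-x * t))) := by
    apply intervalIntegral.integral_congr
    intro t ht
    rw [uIcc_of_le hab] at ht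
    show k t * Real.exp (-x * t) = _
    rw [H t ht]; ring
  rw [step, integral_add (e₁.add e₂) e₃, integral_add e₁ e₂,
    intervalIntegral.integral_const_mul, intervalIntegral.integral_const_mul, intervalIntegral.integral_const_mul]
  rfl

lemma key_lemma (a b : ℝ) (ha : 0 < a) (hab : a < b) (f g : ℝ → ℝ)
    (hf : ContinuousOn f (Icc a b)) (hg : ContinuousOn g (Icc a b))
    (hgpos : ∀ t ∈ Icc a b, 0 < g t)
    (tstar : ℝ) (htstar : tstar ∈ Ioo a b)
    (hinc : StrictMonoOn (fun t => f t / g t) (Icc a tstar))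
    (hdec : StrictAntiOn (fun t => f t / g t) (Icc tstar b))
    (x : ℝ)
    (hV : lap a b (fun t => t * f t) x * lap a b g x
        = lap a b f x * lap a b (fun t => t * g t) x) :
    0 < lap a b f x * lap a b (fun t => t * (t * g t)) x
        - lap a b (fun t => t * (t * f t)) x * lap a b g x := by
  have hts1 : a ≤ tstar := htstar.1.le
  have hts2 : tstar ≤ b := htstar.2.le
  have hsubL : Icc a tstar ⊆ Icc a b := Icc_subset_Icc le_rfl hts2
  have hsubR : Icc tstar b ⊆ Icc a b := Icc_subset_Icc hts1 le_rfl
  set φ : ℝ → ℝ := fun t => f t / g t with hφdef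
  have hφc : ContinuousOn φ (Icc a b) := hf.div hg (fun t ht => (hgpos t ht).ne')
  have hgc1 : ContinuousOn (fun t => t * g t) (Icc a b) := continuousOn_id.mul hg
  have hgc2 : ContinuousOn (fun t => t * (t * g t)) (Icc a b) := continuousOn_id.mul hgc1
  have hfc1 : ContinuousOn (fun t => t * f t) (Icc a b) := continuousOn_id.mul hf
  have hfc2 : ContinuousOn (fun t => t * (t * f t)) (Icc a b) := continuousOn_id.mul hfc1
  set W := lap a b g x with hWdef
  set P := lap a b f x with hPdef
  set T := lap a b (fun t => t * g t) x with hTdef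
  set Q := lap a b (fun t => t * f t) x with hQdef
  set U := lap a b (fun t => t * (t * g t)) x with hUdef
  set R := lap a b (fun t => t * (t * f t)) x with hRdef
  have hW : 0 < W := lap_pos a b hab g hg hgpos x
  set S : ℝ := φ tstar * W - P with hSdef
  set χ : ℝ → ℝ := fun t => W * (φ tstar - φ t) - S with hχdef
  clear_value φ W P T Q U R S χ
  have hχc : ContinuousOn χ (Icc a b) := by
    rw [hχdef]
    exact (continuousOn_const.mul (continuousOn_const.sub hφc)).sub continuousOn_const
  have hχanti : StrictAntiOn χ (Icc a tstar) := by
    intro s hs t ht hst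
    have h1 := hinc hs ht hst
    simp only [hχdef]
    nlinarith
  have hχmono : StrictMonoOn χ (Icc tstar b) := by
    intro s hs t ht hst
    have h1 := hdec hs ht hst
    simp only [hχdef]
    nlinarith
  have hχg : ∀ t ∈ Icc a b, χ t * g t = P * g t - W * f t := by
    intro t ht
    have hgne := (hgpos t ht).ne'
    simp only [hχdef, hSdef, hφdef]
    field_simp
    ring
  -- φ attains max at tstar
  have hφmax : ∀ t ∈ Icc a b, φ t ≤ φ tstar := by
    intro t ht
    rcases le_total t tstar with h | h
    · rcases eq_or_lt_of_le h with h' | h'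
      · rw [h']
      · exact (hinc ⟨ht.1, h⟩ ⟨hts1, le_rfl⟩ h').le
    · rcases eq_or_lt_of_le h with h' | h'
      · rw [← h']
      · exact (hdec ⟨le_rfl, hts2⟩ ⟨h, ht.2⟩ h').le
  have hS : 0 ≤ S := by
    have hc2 : lap a b (fun t => φ tstar * g t) x = φ tstar * W := by
      have h2 := lap_comb a b hab.le g g g (fun t => φ tstar * g t) hg hg hg
        (φ tstar) 0 0 x (fun t _ => by ring)
      rw [h2, ← hWdef]; ring
    have h1 : P ≤ φ tstar * W := by
      rw [← hc2, hPdef]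
      apply intervalIntegral.integral_mono_on hab.le
        (lap_intble a b hab.le f hf x)
        (lap_intble a b hab.le (fun t => φ tstar * g t) (continuousOn_const.mul hg) x)
      intro t ht
      have h3 := hφmax t ht
      have hg0 := hgpos t ht
      have h4 : φ t * g t = f t := by simp only [hφdef]; field_simp
      have h5 : f t ≤ φ tstar * g t := by nlinarith
      exact mul_le_mul_of_nonneg_right h5 (Real.exp_pos _).le
    simp only [hSdef]; linarith
  have hχts : χ tstar ≤ 0 := by simp only [hχdef]; simp; linarith
  -- least element c on the left
  obtain ⟨c, hcZ, hclb⟩ := (IsCompact.of_isClosed_subset isCompact_Icc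
      ((hχc.mono hsubL).preimage_isClosed_of_isClosed isClosed_Icc isClosed_Iic)
      inter_subset_left).exists_isLeast ⟨tstar, ⟨hts1, le_rfl⟩, hχts⟩
  have hcIcc : c ∈ Icc a tstar := hcZ.1
  have hcχ : χ c ≤ 0 := hcZ.2
  have hcmin : ∀ t ∈ Icc a tstar, t < c → 0 < χ t := by
    intro t ht hlt
    by_contra hcon
    push_neg at hcon
    exact absurd (hclb ⟨ht, hcon⟩) (not_le.2 hlt)
  -- greatest element d on the right
  obtain ⟨d, hdZ, hdub⟩ := (IsCompact.of_isClosed_subset isCompact_Icc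
      ((hχc.mono hsubR).preimage_isClosed_of_isClosed isClosed_Icc isClosed_Iic)
      inter_subset_left).exists_isGreatest ⟨tstar, ⟨le_rfl, hts2⟩, hχts⟩
  have hdIcc : d ∈ Icc tstar b := hdZ.1
  have hdχ : χ d ≤ 0 := hdZ.2
  have hdmax : ∀ t ∈ Icc tstar b, d < t → 0 < χ t := by
    intro t ht hlt
    by_contra hcon
    push_neg at hcon
    exact absurd (hdub ⟨ht, hcon⟩) (not_le.2 hlt)
  -- pointwise sign
  have hpw : ∀ t ∈ Icc a b, 0 ≤ (t - c) * (t - d) * χ t := by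
    intro t ht
    rcases lt_or_ge t c with h1 | h1
    · have hp := hcmin t ⟨ht.1, le_trans h1.le hcIcc.2⟩ h1
      have h2 : t < d := lt_of_lt_of_le (lt_of_lt_of_le h1 hcIcc.2) hdIcc.1
      have h4 := mul_pos_of_neg_of_neg (show t - c < 0 by linarith) (show t - d < 0 by linarith)
      exact (mul_pos h4 hp).le
    · rcases le_or_gt t d with h2 | h2
      · have hnp : χ t ≤ 0 := by
          rcases le_total t tstar with h3 | h3
          · exact le_trans (hχanti.antitoneOn hcIcc ⟨ht.1, h3⟩ h1) hcχ
          · exact le_trans (hχmono.monotoneOn ⟨h3, ht.2⟩ hdIcc h2) hdχ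
        have h4 : (t - c) * (t - d) ≤ 0 :=
          mul_nonpos_iff.2 (Or.inl ⟨by linarith, by linarith⟩)
        exact mul_nonneg_iff.2 (Or.inr ⟨h4, hnp⟩)
      · have hp := hdmax t ⟨le_trans hdIcc.1 h2.le, ht.2⟩ h2
        have h3 : c < t := lt_of_le_of_lt (le_trans hcIcc.2 hdIcc.1) h2
        have h4 := mul_pos (show (0:ℝ) < t - c by linarith) (show (0:ℝ) < t - d by linarith)
        exact (mul_pos h4 hp).le
  -- c and d cannot both equal tstar
  have hcd : c < tstar ∨ tstar < d := by
    by_contra hcon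
    push_neg at hcon
    have hc' : c = tstar := le_antisymm hcIcc.2 hcon.1
    have hd' : d = tstar := le_antisymm hcon.2 hdIcc.1
    have hI0 : lap a b (fun t => χ t * g t) x = 0 := by
      have h2 := lap_comb a b hab.le g f g (fun t => χ t * g t) hg hf hg
        P (-W) 0 x (fun t ht => by show χ t * g t = _; rw [hχg t ht]; ring)
      rw [h2, ← hWdef, ← hPdef]; ring
    have hint1 : IntervalIntegrable (fun t => χ t * g t * Real.exp (-x * t)) volume a tstar := by
      apply ContinuousOn.intervalIntegrable
      rw [uIcc_of_le hts1]
      exact (((hχc.mul hg).mul (Continuous.continuousOn (by fun_prop))).mono hsubL)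
    have hint2 : IntervalIntegrable (fun t => χ t * g t * Real.exp (-x * t)) volume tstar b := by
      apply ContinuousOn.intervalIntegrable
      rw [uIcc_of_le hts2]
      exact (((hχc.mul hg).mul (Continuous.continuousOn (by fun_prop))).mono hsubR)
    have hsplit : lap a b (fun t => χ t * g t) x
        = (∫ t in a..tstar, χ t * g t * Real.exp (-x * t))
          + ∫ t in tstar..b, χ t * g t * Real.exp (-x * t) :=
      (integral_add_adjacent_intervals hint1 hint2).symm
    have hp1 : 0 < ∫ t in a..tstar, χ t * g t * Real.exp (-x * t) := by
      apply intervalIntegral_pos_of_pos_on hint1 _ htstar.1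
      intro t ht
      have hp := hcmin t ⟨ht.1.le, ht.2.le⟩ (by rw [hc']; exact ht.2)
      have hg0 := hgpos t ⟨ht.1.le, le_trans ht.2.le hts2⟩
      positivity
    have hp2 : 0 < ∫ t in tstar..b, χ t * g t * Real.exp (-x * t) := by
      apply intervalIntegral_pos_of_pos_on hint2 _ htstar.2
      intro t ht
      have hp := hdmax t ⟨ht.1.le, ht.2.le⟩ (by rw [hd']; exact ht.1)
      have hg0 := hgpos t ⟨le_trans hts1 ht.1.le, ht.2.le⟩
      positivity
    rw [hsplit] at hI0
    linarith
  -- choose a point of strict positivity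
  have hpt : ∃ t₀ ∈ Ioo a b, 0 < (t₀ - c) * (t₀ - d) * χ t₀ := by
    rcases hcd with h | h
    · refine ⟨(c + tstar) / 2, ⟨?_, ?_⟩, ?_⟩
      · have := hcIcc.1; linarith
      · have := htstar.2; linarith
      · have ht₀L : (c + tstar) / 2 ∈ Icc a tstar := ⟨by linarith [hcIcc.1], by linarith⟩
        have hχneg : χ ((c + tstar) / 2) < 0 :=
          lt_of_lt_of_le (hχanti hcIcc ht₀L (by linarith)) hcχ
        have h2 : (c + tstar) / 2 < d := by linarith [hdIcc.1]
        have h4 := mul_pos_of_neg_of_neg (show (c + tstar) / 2 - d < 0 by linarith) hχneg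
        rw [mul_assoc]
        exact mul_pos (show (0:ℝ) < (c + tstar) / 2 - c by linarith) h4
    · refine ⟨(tstar + d) / 2, ⟨?_, ?_⟩, ?_⟩
      · have := htstar.1; linarith
      · have := hdIcc.2; linarith
      · have ht₀R : (tstar + d) / 2 ∈ Icc tstar b := ⟨by linarith, by linarith [hdIcc.2]⟩
        have hχneg : χ ((tstar + d) / 2) < 0 :=
          lt_of_lt_of_le (hχmono ht₀R hdIcc (by linarith)) hdχ
        have h2 : c < (tstar + d) / 2 := by linarith [hcIcc.2]
        have h4 := mul_pos_of_neg_of_neg (show (tstar + d) / 2 - d < 0 by linarith) hχneg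
        rw [mul_assoc]
        exact mul_pos (show (0:ℝ) < (tstar + d) / 2 - c by linarith) h4
  obtain ⟨t₀, ht₀, hpt₀⟩ := hpt
  -- positivity of the main integral
  have hqcont : ContinuousOn (fun t => (t - c) * (t - d) * (χ t * g t)) (Icc a b) :=
    (Continuous.continuousOn (by fun_prop)).mul (hχc.mul hg)
  have hJpos : 0 < lap a b (fun t => (t - c) * (t - d) * (χ t * g t)) x := by
    apply intble_pos_pt a b hab _ (hqcont.mul (Continuous.continuousOn (by fun_prop))) _ t₀ ht₀
    · have hg0 := hgpos t₀ ⟨ht₀.1.le, ht₀.2.le⟩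
      have he := Real.exp_pos (-x * t₀)
      simp only [Pi.mul_apply]
      nlinarith [mul_pos hpt₀ (mul_pos hg0 he)]
    · intro t ht
      have h1 := hpw t ht
      have hg0 := hgpos t ht
      have he := Real.exp_pos (-x * t)
      simp only [Pi.mul_apply]
      nlinarith [mul_nonneg h1 (mul_pos hg0 he).le]
  -- linear expansion of the main integral
  have hqgc : ContinuousOn (fun t => (t - c) * (t - d) * g t) (Icc a b) :=
    (Continuous.continuousOn (by fun_prop : Continuous fun t : ℝ => (t - c) * (t - d))).mul hg
  have hqfc : ContinuousOn (fun t => (t - c) * (t - d) * f t) (Icc a b) :=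
    (Continuous.continuousOn (by fun_prop : Continuous fun t : ℝ => (t - c) * (t - d))).mul hf
  have step1 := lap_comb a b hab.le (fun t => (t - c) * (t - d) * g t)
    (fun t => (t - c) * (t - d) * f t) g (fun t => (t - c) * (t - d) * (χ t * g t))
    hqgc hqfc hg P (-W) 0 x
    (fun t ht => by show (t - c) * (t - d) * (χ t * g t) = _; rw [hχg t ht]; ring)
  have step2 := lap_comb a b hab.le (fun t => t * (t * g t)) (fun t => t * g t) g
    (fun t => (t - c) * (t - d) * g t) hgc2 hgc1 hg 1 (-(c + d)) (c * d) x
    (fun t _ => by show (t - c) * (t - d) * g t = _; ring)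
  have step3 := lap_comb a b hab.le (fun t => t * (t * f t)) (fun t => t * f t) f
    (fun t => (t - c) * (t - d) * f t) hfc2 hfc1 hf 1 (-(c + d)) (c * d) x
    (fun t _ => by show (t - c) * (t - d) * f t = _; ring)
  rw [step2, step3, ← hWdef, ← hPdef, ← hTdef, ← hQdef, ← hUdef, ← hRdef] at step1
  rw [step1] at hJpos
  have hJeq : P * (1 * U + -(c + d) * T + c * d * W)
      + -W * (1 * R + -(c + d) * Q + c * d * P) + 0 * W = P * U - R * W := by
    linear_combination (c + d) * hV
  rw [hJeq] at hJpos
  exact hJpos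

theorem stmt_0 (a b : ℝ) (ha : 0 < a) (hab : a < b)
    (f g : ℝ → ℝ)
    (hf : ContinuousOn f (Icc a b)) (hg : ContinuousOn g (Icc a b))
    (hgpos : ∀ t ∈ Icc a b, 0 < g t)
    (F G : ℝ → ℝ)
    (hF : ∀ x, F x = ∫ t in a..b, f t * Real.exp (-x * t))
    (hG : ∀ x, G x = ∫ t in a..b, g t * Real.exp (-x * t))
    (tstar : ℝ) (htstar : tstar ∈ Ioo a b)
    (hinc : StrictMonoOn (fun t => f t / g t) (Icc a tstar))
    (hdec : StrictAntiOn (fun t => f t / g t) (Icc tstar b))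
    (L : ℝ)
    (hL : Tendsto (fun x => deriv F x / deriv G x * G x - F x)
      (𝓝[>] (0 : ℝ)) (𝓝 L)) :
    AntitoneOn (fun x => F x / G x) (Ioi 0) ↔ 0 ≤ L := by
  have hFeq : F = lap a b f := funext fun x => hF x
  have hGeq : G = lap a b g := funext fun x => hG x
  have hfc1 : ContinuousOn (fun t => t * f t) (Icc a b) := continuousOn_id.mul hf
  have hgc1 : ContinuousOn (fun t => t * g t) (Icc a b) := continuousOn_id.mul hg
  have hGpos : ∀ x, 0 < lap a b g x := lap_pos a b hab g hg hgpos
  have hG1pos : ∀ x, 0 < lap a b (fun t => t * g t) x :=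
    lap_pos a b hab _ hgc1 (fun t ht => mul_pos (lt_of_lt_of_le ha ht.1) (hgpos t ht))
  -- basic derivatives
  have hFd : ∀ x, HasDerivAt F (-(lap a b (fun t => t * f t) x)) x := by
    intro x; rw [hFeq]; exact lap_hasDerivAt a b hab.le f hf x
  have hGd : ∀ x, HasDerivAt G (-(lap a b (fun t => t * g t) x)) x := by
    intro x; rw [hGeq]; exact lap_hasDerivAt a b hab.le g hg x
  have hF1d : ∀ x, HasDerivAt (lap a b (fun t => t * f t))
      (-(lap a b (fun t => t * (t * f t)) x)) x := by
    intro x; simpa using lap_hasDerivAt a b hab.le (fun t => t * f t) hfc1 x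
  have hG1d : ∀ x, HasDerivAt (lap a b (fun t => t * g t))
      (-(lap a b (fun t => t * (t * g t)) x)) x := by
    intro x; simpa using lap_hasDerivAt a b hab.le (fun t => t * g t) hgc1 x
  -- the V function
  set V : ℝ → ℝ := fun x => lap a b (fun t => t * f t) x * lap a b g x
      - lap a b f x * lap a b (fun t => t * g t) x with hVdef
  have hVd : ∀ x, HasDerivAt V
      (lap a b f x * lap a b (fun t => t * (t * g t)) x
        - lap a b (fun t => t * (t * f t)) x * lap a b g x) x := by
    intro x
    have h1 := ((hF1d x).mul (hGeq ▸ hGd x)).sub ((hFeq ▸ hFd x).mul (hG1d x))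
    exact h1.congr_deriv (by ring)
  have hVcont : Continuous V := by
    have : Differentiable ℝ V := fun x => (hVd x).differentiableAt
    exact this.continuous
  -- quotient derivative
  have hQd : ∀ x, HasDerivAt (fun y => F y / G y)
      ((-(lap a b (fun t => t * f t) x) * G x - F x * -(lap a b (fun t => t * g t) x))
        / G x ^ 2) x := by
    intro x
    exact (hFd x).div (hGd x) (by rw [hGeq]; exact (hGpos x).ne')
  have hQderiv : ∀ x, deriv (fun y => F y / G y) x
      = -V x / lap a b g x ^ 2 := by
    intro x
    rw [(hQd x).deriv, hFeq, hGeq, hVdef]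
    ring
  -- identification of L
  have hHey : ∀ x, deriv F x / deriv G x * G x - F x = V x / lap a b (fun t => t * g t) x := by
    intro x
    rw [(hFd x).deriv, (hGd x).deriv, hFeq, hGeq, hVdef]
    have h1 := (hG1pos x).ne'
    field_simp
  have hLid : L = V 0 / lap a b (fun t => t * g t) 0 := by
    have t1 : Tendsto (fun x => V x / lap a b (fun t => t * g t) x) (𝓝[>] (0:ℝ))
        (𝓝 (V 0 / lap a b (fun t => t * g t) 0)) := by
      apply Tendsto.mono_left _ nhdsWithin_le_nhds
      exact (hVcont.continuousAt.div (hG1d 0).differentiableAt.continuousAt (hG1pos 0).ne')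
    have t2 : Tendsto (fun x => V x / lap a b (fun t => t * g t) x) (𝓝[>] (0:ℝ)) (𝓝 L) := by
      apply hL.congr
      intro x
      exact hHey x
    exact tendsto_nhds_unique t2 t1
  constructor
  · -- antitone → 0 ≤ L
    intro hA
    have hVpos : ∀ x, 0 < x → 0 ≤ V x := by
      intro x hx
      have hq := hQd x
      rw [hasDerivAt_iff_tendsto_slope] at hq
      have hs : ∀ᶠ y in 𝓝[>] x, slope (fun y => F y / G y) x y ≤ 0 := by
        filter_upwards [eventually_mem_nhdsWithin] with y hy
        rw [slope_def_field]
        apply div_nonpos_of_nonpos_of_nonneg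
        · have := hA (mem_Ioi.2 hx) (mem_Ioi.2 (lt_trans hx hy)) (le_of_lt hy)
          linarith
        · have : x < y := hy
          linarith
      have hd : (-(lap a b (fun t => t * f t) x) * G x
          - F x * -(lap a b (fun t => t * g t) x)) / G x ^ 2 ≤ 0 :=
        le_of_tendsto (hq.mono_left (nhdsWithin_mono x (show Ioi x ⊆ {x}ᶜ from fun y hy => ne_of_gt hy))) hs
      rw [hFeq, hGeq] at hd
      have hsq : 0 < lap a b g x ^ 2 := pow_pos (hGpos x) 2
      rcases div_nonpos_iff.mp hd with ⟨h1, h2⟩ | ⟨h1, h2⟩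
      · linarith
      · rw [hVdef]; dsimp only; linarith
    have hV0 : 0 ≤ V 0 := by
      apply ge_of_tendsto (hVcont.continuousAt.tendsto.mono_left
        (nhdsWithin_le_nhds (s := Ioi (0:ℝ))))
      filter_upwards [eventually_mem_nhdsWithin] with y hy
      exact hVpos y hy
    rw [hLid]
    exact div_nonneg hV0 (hG1pos 0).le
  · -- 0 ≤ L → antitone
    intro hLnn
    have hV0 : 0 ≤ V 0 := by
      rw [hLid] at hLnn
      rcases div_nonneg_iff.mp hLnn with ⟨h1, h2⟩ | ⟨h1, h2⟩
      · exact h1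
      · linarith [hG1pos 0]
    have hVnn : ∀ x, 0 ≤ x → 0 ≤ V x := by
      intro x₁ hx₁
      by_contra hneg
      push_neg at hneg
      have hx₁0 : (0:ℝ) < x₁ := by
        rcases eq_or_lt_of_le hx₁ with h | h
        · exfalso; rw [← h] at hneg; linarith
        · exact h
      have hcpt : IsCompact (Icc (0:ℝ) x₁ ∩ V ⁻¹' Ici 0) :=
        IsCompact.of_isClosed_subset isCompact_Icc
          (isClosed_Icc.inter (isClosed_Ici.preimage hVcont)) inter_subset_left
      obtain ⟨x₂, hx₂Z, hx₂ub⟩ := hcpt.exists_isGreatest ⟨0, ⟨le_rfl, hx₁0.le⟩, hV0⟩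
      have hx₂V : 0 ≤ V x₂ := hx₂Z.2
      have hx₂lt : x₂ < x₁ := by
        rcases eq_or_lt_of_le hx₂Z.1.2 with h | h
        · exfalso; rw [h] at hx₂V; linarith
        · exact h
      have hVneg' : ∀ y, x₂ < y → y ≤ x₁ → V y < 0 := by
        intro y h1 h2
        by_contra h
        push_neg at h
        exact absurd (hx₂ub ⟨⟨le_trans hx₂Z.1.1 h1.le, h2⟩, h⟩) (not_le.2 h1)
      have hVx₂ : V x₂ = 0 := by
        apply le_antisymm _ hx₂V
        apply le_of_tendsto (hVcont.continuousAt.tendsto.mono_left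
          (nhdsWithin_le_nhds (s := Ioi x₂)))
        filter_upwards [Ioc_mem_nhdsGT_of_mem ⟨le_rfl, hx₂lt⟩] with y hy
        exact (hVneg' y hy.1 hy.2).le
      have hkey := key_lemma a b ha hab f g hf hg hgpos tstar htstar hinc hdec x₂
        (by rw [hVdef] at hVx₂; dsimp only at hVx₂; linarith)
      have hslope := hVd x₂
      rw [hasDerivAt_iff_tendsto_slope] at hslope
      have e1 : ∀ᶠ y in 𝓝[>] x₂, 0 < slope V x₂ y :=
        (hslope.mono_left (nhdsWithin_mono x₂ (show Ioi x₂ ⊆ {x₂}ᶜ from fun y hy => ne_of_gt hy))).eventually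
          (eventually_gt_nhds hkey)
      obtain ⟨y, hy1, hy2⟩ := (e1.and (eventually_of_mem
        (Ioc_mem_nhdsGT_of_mem ⟨le_rfl, hx₂lt⟩) (fun y hy => hy))).exists
      rw [slope_def_field] at hy1
      have h7 : 0 < y - x₂ := by have := hy2.1; linarith
      rcases div_pos_iff.mp hy1 with ⟨h8, _⟩ | ⟨_, h9⟩
      · have := hVneg' y hy2.1 hy2.2
        linarith
      · linarith
    apply antitoneOn_of_deriv_nonpos (convex_Ioi 0)
    · intro x hx
      exact ((hQd x).differentiableAt.continuousAt).continuousWithinAt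
    · rw [interior_Ioi]
      intro x hx
      exact (hQd x).differentiableAt.differentiableWithinAt
    · rw [interior_Ioi]
      intro x hx
      rw [hQderiv x]
      apply div_nonpos_of_nonpos_of_nonneg
      · have := hVnn x (le_of_lt hx)
        linarith
      · positivity
end

section
/- Let 0 < a < b < ∞, let f and g be continuous functions on [a,b] with g(t) > 0 for all t ∈ [a,b], and define F(x) = ∫_a^b f(t)·e^{−xt} dt and G(x) = ∫_a^b g(t)·e^{−xt} dt for x > 0. Then lim_{x→0⁺} F(x)/G(x) = (∫_a^b f(t) dt)/(∫_a^b g(t) dt) and lim_{x→∞} F(x)/G(x) = f(a)/g(a). -/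
open Real Filter Set MeasureTheory Topology

private lemma integ_aux {a b : ℝ} (hab : a ≤ b) (x : ℝ) {φ : ℝ → ℝ}
    (hφ : ContinuousOn φ (Icc a b)) :
    IntervalIntegrable (fun t => φ t * Real.exp (-x * t)) volume a b := by
  apply ContinuousOn.intervalIntegrable
  exact (hφ.mono (uIcc_of_le hab).subset).mul (Continuous.continuousOn (by continuity))

private lemma limit_zero (a b : ℝ) (ha : 0 < a) (hab : a < b) (φ : ℝ → ℝ)
    (hφ : ContinuousOn φ (Icc a b)) :
    Tendsto (fun x => ∫ t in a..b, φ t * Real.exp (-x * t)) (𝓝[>] (0:ℝ))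
      (𝓝 (∫ t in a..b, φ t)) := by
  obtain ⟨M, hM⟩ := isCompact_Icc.exists_bound_of_continuousOn hφ
  simp only [Real.norm_eq_abs] at hM
  have hφi : IntervalIntegrable φ volume a b :=
    (hφ.mono (uIcc_of_le hab.le).subset).intervalIntegrable
  rw [← tendsto_sub_nhds_zero_iff]
  apply squeeze_zero_norm' (a := fun x => (b - a) * (M * (1 - Real.exp (-x * b))))
  · filter_upwards [self_mem_nhdsWithin] with x (hx : (0:ℝ) < x)
    have h1 := integ_aux hab.le x hφ
    rw [Real.norm_eq_abs, ← intervalIntegral.integral_sub h1 hφi]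
    calc |∫ t in a..b, (φ t * Real.exp (-x * t) - φ t)|
        ≤ ∫ t in a..b, |φ t * Real.exp (-x * t) - φ t| :=
          intervalIntegral.abs_integral_le_integral_abs hab.le
      _ ≤ ∫ t in a..b, M * (1 - Real.exp (-x * b)) := by
          apply intervalIntegral.integral_mono_on hab.le ((h1.sub hφi).abs)
            intervalIntegrable_const
          intro t ht
          have ht1 : Real.exp (-x * t) ≤ 1 := by
            rw [Real.exp_le_one_iff]
            nlinarith [ht.1]
          have ht2 : Real.exp (-x * b) ≤ Real.exp (-x * t) := by
            apply Real.exp_le_exp.2; nlinarith [ht.2]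
          have h0M : (0:ℝ) ≤ M := (abs_nonneg _).trans (hM t ht)
          calc |φ t * Real.exp (-x * t) - φ t| = |φ t| * (1 - Real.exp (-x * t)) := by
                have heq : φ t * Real.exp (-x * t) - φ t = -(φ t * (1 - Real.exp (-x * t))) := by
                  ring
                rw [heq, abs_neg, abs_mul,
                  abs_of_nonneg (by linarith : (0:ℝ) ≤ 1 - Real.exp (-x * t))]
            _ ≤ M * (1 - Real.exp (-x * b)) := by
                apply mul_le_mul (hM t ht) (by linarith) (by linarith) h0M
      _ = (b - a) * (M * (1 - Real.exp (-x * b))) := by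
          rw [intervalIntegral.integral_const, smul_eq_mul]
  · have hc : Continuous (fun x : ℝ => (b - a) * (M * (1 - Real.exp (-x * b)))) := by
      continuity
    have := hc.tendsto' 0 0 (by simp)
    exact this.mono_left nhdsWithin_le_nhds

set_option maxHeartbeats 2000000 in
theorem stmt_1 (a b : ℝ) (ha : 0 < a) (hab : a < b)
    (f g : ℝ → ℝ)
    (hf : ContinuousOn f (Icc a b)) (hg : ContinuousOn g (Icc a b))
    (hgpos : ∀ t ∈ Icc a b, 0 < g t)
    (F G : ℝ → ℝ)
    (hF : ∀ x, F x = ∫ t in a..b, f t * Real.exp (-x * t))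
    (hG : ∀ x, G x = ∫ t in a..b, g t * Real.exp (-x * t)) :
    Tendsto (fun x => F x / G x) (𝓝[>] (0 : ℝ))
      (𝓝 ((∫ t in a..b, f t) / (∫ t in a..b, g t))) ∧
    Tendsto (fun x => F x / G x) atTop (𝓝 (f a / g a)) := by
  have hga : 0 < g a := hgpos a ⟨le_rfl, hab.le⟩
  -- positivity of G-type integrals
  have hGpos : ∀ x : ℝ, 0 < ∫ t in a..b, g t * Real.exp (-x * t) := by
    intro x
    apply intervalIntegral.intervalIntegral_pos_of_pos_on (integ_aux hab.le x hg) _ hab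
    intro t ht
    exact mul_pos (hgpos t ⟨ht.1.le, ht.2.le⟩) (Real.exp_pos _)
  constructor
  · have h1 := limit_zero a b ha hab f hf
    have h2 := limit_zero a b ha hab g hg
    have hgI : (0:ℝ) < ∫ t in a..b, g t := by
      apply intervalIntegral.intervalIntegral_pos_of_pos_on _ _ hab
      · exact (hg.mono (uIcc_of_le hab.le).subset).intervalIntegrable
      · exact fun t ht => hgpos t ⟨ht.1.le, ht.2.le⟩
    have := h1.div h2 hgI.ne'
    refine Tendsto.congr (fun x => ?_) this
    simp only [Pi.div_apply, hF, hG]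
  · -- Laplace asymptotics at infinity
    set c := f a / g a with hc
    set h := fun t => f t - c * g t with hh
    have hhc : ContinuousOn h (Icc a b) := hf.sub ((continuousOn_const).mul hg)
    have hha : h a = 0 := by
      simp only [hh, hc]
      field_simp
      ring
    obtain ⟨t0, ht0, hmin⟩ := isCompact_Icc.exists_isMinOn (nonempty_Icc.2 hab.le) hg
    set m := g t0 with hm
    have hm0 : 0 < m := hgpos t0 ht0
    have hmle : ∀ t ∈ Icc a b, m ≤ g t := fun t ht => hmin ht
    obtain ⟨M, hM⟩ := isCompact_Icc.exists_bound_of_continuousOn hhc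
    simp only [Real.norm_eq_abs] at hM
    have hM0 : (0:ℝ) ≤ M := (abs_nonneg _).trans (hM a ⟨le_rfl, hab.le⟩)
    rw [Metric.tendsto_atTop]
    intro ε hε
    set ε₁ := ε * m / 4 with hε₁
    have hε₁0 : 0 < ε₁ := div_pos (mul_pos hε hm0) (by norm_num)
    -- small interval where |h| ≤ ε₁
    have hcw : ContinuousWithinAt h (Icc a b) a := hhc a ⟨le_rfl, hab.le⟩
    rw [Metric.continuousWithinAt_iff] at hcw
    obtain ⟨δ, hδ0, hδ⟩ := hcw ε₁ hε₁0
    set d := min (δ / 2) ((b - a) / 2) with hd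
    have hd0 : 0 < d := lt_min (by linarith) (by linarith)
    have hdb : a + d < b := by
      have : d ≤ (b - a) / 2 := min_le_right _ _
      linarith
    set p := a + d / 2 with hp
    set q := a + d with hq
    have hap : a < p := by simp only [hp]; linarith
    have hpq : p < q := by simp only [hp, hq]; linarith
    have hqb : q < b := hdb
    have haq : a ≤ q := hap.le.trans hpq.le
    have hapb : a ≤ b := hab.le
    have hpb : p ≤ b := hpq.le.trans hqb.le
    have hsmall : ∀ t ∈ Icc a q, |h t| ≤ ε₁ := by
      intro t ht
      have htb : t ∈ Icc a b := ⟨ht.1, ht.2.trans hqb.le⟩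
      have : dist t a < δ := by
        rw [Real.dist_eq, abs_of_nonneg (by linarith [ht.1])]
        have : t ≤ a + d := ht.2
        have : d ≤ δ / 2 := min_le_left _ _
        linarith
      have := hδ htb this
      rw [Real.dist_eq, hha, sub_zero] at this
      exact this.le
    -- the constant for the tail
    set K := M * (b - a) / (d / 2 * m) with hK
    have hK0 : 0 ≤ K :=
      div_nonneg (mul_nonneg hM0 (by linarith)) (mul_pos (half_pos hd0) hm0).le
    -- choose N
    have htend : Tendsto (fun x : ℝ => K * Real.exp (-(x * (d / 2)))) atTop (𝓝 0) := by
      have : Tendsto (fun x : ℝ => -(x * (d / 2))) atTop atBot :=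
        tendsto_neg_atTop_atBot.comp (Tendsto.atTop_mul_const (half_pos hd0) tendsto_id)
      simpa using (Real.tendsto_exp_atBot.comp this).const_mul K
    rw [Metric.tendsto_atTop] at htend
    obtain ⟨N0, hN0⟩ := htend (ε / 2) (by linarith)
    refine ⟨max N0 1, fun x hx => ?_⟩
    have hx0 : 0 < x := lt_of_lt_of_le one_pos (le_trans (le_max_right _ _) hx)
    have hxN0 := hN0 x (le_trans (le_max_left _ _) hx)
    rw [Real.dist_eq, sub_zero,
      abs_of_nonneg (mul_nonneg hK0 (Real.exp_pos _).le)] at hxN0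
    -- notation
    set Gx := ∫ t in a..b, g t * Real.exp (-x * t) with hGx
    have hGx0 : 0 < Gx := hGpos x
    -- lower bound for Gx
    have hGlow : d / 2 * (m * Real.exp (-x * p)) ≤ Gx := by
      have hsplit : (∫ t in a..p, g t * Real.exp (-x * t)) +
          (∫ t in p..b, g t * Real.exp (-x * t)) = Gx :=
        intervalIntegral.integral_add_adjacent_intervals
          (integ_aux hap.le x (hg.mono (Icc_subset_Icc le_rfl hpb)))
          (integ_aux hpb x (hg.mono (Icc_subset_Icc hap.le le_rfl)))
      have h2nn : 0 ≤ ∫ t in p..b, g t * Real.exp (-x * t) := by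
        apply intervalIntegral.integral_nonneg hpb
        intro t ht
        exact (mul_pos (hgpos t ⟨hap.le.trans ht.1, ht.2⟩) (Real.exp_pos _)).le
      have h1low : (p - a) • (m * Real.exp (-x * p)) ≤ ∫ t in a..p, g t * Real.exp (-x * t) := by
        rw [← intervalIntegral.integral_const]
        apply intervalIntegral.integral_mono_on hap.le intervalIntegrable_const
          (integ_aux hap.le x (hg.mono (Icc_subset_Icc le_rfl hpb)))
        intro t ht
        have htb : t ∈ Icc a b := ⟨ht.1, ht.2.trans hpb⟩
        have he : Real.exp (-x * p) ≤ Real.exp (-x * t) := by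
          apply Real.exp_le_exp.2; nlinarith [ht.2]
        have := hmle t htb
        nlinarith [Real.exp_pos (-x * t), Real.exp_pos (-x * p), hgpos t htb]
      have hpa : p - a = d / 2 := by simp [hp]
      rw [smul_eq_mul, hpa] at h1low
      linarith
    -- upper bound for numerator
    have hnum : |(∫ t in a..b, f t * Real.exp (-x * t)) - c * Gx| ≤
        ε₁ / m * Gx + M * (b - a) * Real.exp (-x * q) := by
      have heq : (∫ t in a..b, f t * Real.exp (-x * t)) - c * Gx =
          ∫ t in a..b, h t * Real.exp (-x * t) := by
        rw [hGx, ← intervalIntegral.integral_const_mul,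
          ← intervalIntegral.integral_sub (integ_aux hab.le x hf)
            (((integ_aux hab.le x hg)).const_mul c)]
        congr 1; funext t; simp only [hh]; ring
      rw [heq]
      have hIq : IntervalIntegrable (fun t => h t * Real.exp (-x * t)) volume a q :=
        integ_aux haq x (hhc.mono (Icc_subset_Icc le_rfl hqb.le))
      have hIqb : IntervalIntegrable (fun t => h t * Real.exp (-x * t)) volume q b :=
        integ_aux hqb.le x (hhc.mono (Icc_subset_Icc haq le_rfl))
      have hsplit : (∫ t in a..q, h t * Real.exp (-x * t)) +
          (∫ t in q..b, h t * Real.exp (-x * t)) = ∫ t in a..b, h t * Real.exp (-x * t) :=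
        intervalIntegral.integral_add_adjacent_intervals hIq hIqb
      rw [← hsplit]
      have hbd1 : |∫ t in a..q, h t * Real.exp (-x * t)| ≤ ε₁ / m * Gx := by
        calc |∫ t in a..q, h t * Real.exp (-x * t)|
            ≤ ∫ t in a..q, |h t * Real.exp (-x * t)| :=
              intervalIntegral.abs_integral_le_integral_abs haq
          _ ≤ ∫ t in a..q, ε₁ / m * (g t * Real.exp (-x * t)) := by
              apply intervalIntegral.integral_mono_on haq hIq.abs
                (((integ_aux haq x
                  (hg.mono (Icc_subset_Icc le_rfl hqb.le)))).const_mul _)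
              intro t ht
              have htb : t ∈ Icc a b := ⟨ht.1, ht.2.trans hqb.le⟩
              rw [abs_mul, abs_of_pos (Real.exp_pos _)]
              have h1 := hsmall t ht
              have h2 := hmle t htb
              have h3 : ε₁ ≤ ε₁ / m * g t := by
                rw [div_mul_eq_mul_div, le_div_iff₀ hm0]
                nlinarith
              nlinarith [Real.exp_pos (-x * t)]
          _ = ε₁ / m * ∫ t in a..q, g t * Real.exp (-x * t) :=
              intervalIntegral.integral_const_mul _ _
          _ ≤ ε₁ / m * Gx := by
              apply mul_le_mul_of_nonneg_left _ (div_nonneg hε₁0.le hm0.le)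
              have hsplit2 : (∫ t in a..q, g t * Real.exp (-x * t)) +
                  (∫ t in q..b, g t * Real.exp (-x * t)) = Gx :=
                intervalIntegral.integral_add_adjacent_intervals
                  (integ_aux haq x (hg.mono (Icc_subset_Icc le_rfl hqb.le)))
                  (integ_aux hqb.le x (hg.mono (Icc_subset_Icc haq le_rfl)))
              have : 0 ≤ ∫ t in q..b, g t * Real.exp (-x * t) := by
                apply intervalIntegral.integral_nonneg hqb.le
                intro t ht
                exact (mul_pos (hgpos t ⟨haq.trans ht.1, ht.2⟩)
                  (Real.exp_pos _)).le
              linarith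
      have hbd2 : |∫ t in q..b, h t * Real.exp (-x * t)| ≤ M * (b - a) * Real.exp (-x * q) := by
        calc |∫ t in q..b, h t * Real.exp (-x * t)|
            ≤ ∫ t in q..b, |h t * Real.exp (-x * t)| :=
              intervalIntegral.abs_integral_le_integral_abs hqb.le
          _ ≤ ∫ t in q..b, M * Real.exp (-x * q) := by
              apply intervalIntegral.integral_mono_on hqb.le hIqb.abs intervalIntegrable_const
              intro t ht
              have htb : t ∈ Icc a b := ⟨haq.trans ht.1, ht.2⟩
              rw [abs_mul, abs_of_pos (Real.exp_pos _)]
              have he : Real.exp (-x * t) ≤ Real.exp (-x * q) := by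
                apply Real.exp_le_exp.2; nlinarith [ht.1]
              have := hM t htb
              nlinarith [Real.exp_pos (-x * t), abs_nonneg (h t)]
          _ = (b - q) * (M * Real.exp (-x * q)) := by
              rw [intervalIntegral.integral_const, smul_eq_mul]
          _ ≤ M * (b - a) * Real.exp (-x * q) := by
              have h1 : b - q ≤ b - a := by simp only [hq]; linarith
              have hMe : 0 ≤ M * Real.exp (-x * q) := mul_nonneg hM0 (Real.exp_pos _).le
              nlinarith [mul_le_mul_of_nonneg_right h1 hMe]
      calc |(∫ t in a..q, h t * Real.exp (-x * t)) + ∫ t in q..b, h t * Real.exp (-x * t)|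
          ≤ |∫ t in a..q, h t * Real.exp (-x * t)| + |∫ t in q..b, h t * Real.exp (-x * t)| :=
            abs_add_le _ _
        _ ≤ ε₁ / m * Gx + M * (b - a) * Real.exp (-x * q) := add_le_add hbd1 hbd2
    -- put it together
    rw [Real.dist_eq, hF, hG, ← hGx]
    have key : |(∫ t in a..b, f t * Real.exp (-x * t)) / Gx - c| ≤
        ε₁ / m + K * Real.exp (-(x * (d / 2))) := by
      have heq : (∫ t in a..b, f t * Real.exp (-x * t)) / Gx - c =
          ((∫ t in a..b, f t * Real.exp (-x * t)) - c * Gx) / Gx := by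
        field_simp
      rw [heq, abs_div, abs_of_pos hGx0, div_le_iff₀ hGx0]
      have hterm2 : M * (b - a) * Real.exp (-x * q) ≤
          K * Real.exp (-(x * (d / 2))) * Gx := by
        have hqe : Real.exp (-x * q) = Real.exp (-(x * (d/2))) * Real.exp (-x * p) := by
          rw [← Real.exp_add]; congr 1; simp only [hq, hp]; ring
        rw [hqe]
        have h1 : K * Real.exp (-(x * (d / 2))) * (d / 2 * (m * Real.exp (-x * p))) ≤
            K * Real.exp (-(x * (d / 2))) * Gx :=
          mul_le_mul_of_nonneg_left hGlow (mul_nonneg hK0 (Real.exp_pos _).le)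
        have h2 : K * (d / 2 * m) = M * (b - a) := by
          rw [hK]; field_simp
        have h3 : K * Real.exp (-(x * (d / 2))) * (d / 2 * (m * Real.exp (-x * p))) =
            M * (b - a) * (Real.exp (-(x * (d / 2))) * Real.exp (-x * p)) := by
          rw [← h2]; ring
        linarith
      calc |(∫ t in a..b, f t * Real.exp (-x * t)) - c * Gx|
          ≤ ε₁ / m * Gx + M * (b - a) * Real.exp (-x * q) := hnum
        _ ≤ ε₁ / m * Gx + K * Real.exp (-(x * (d / 2))) * Gx := by linarith
        _ = (ε₁ / m + K * Real.exp (-(x * (d / 2)))) * Gx := by ring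
    have hε₁m : ε₁ / m = ε / 4 := by
      rw [hε₁]; field_simp
    rw [hε₁m] at key
    linarith
end

section
/- Let f and g be continuous functions on (0,∞) with g(t) > 0 for all t > 0, and suppose the Laplace transforms F(x) = ∫_0^∞ f(t)·e^{−xt} dt and G(x) = ∫_0^∞ g(t)·e^{−xt} dt converge (i.e., the integrands are integrable on (0,∞)) for every x > 0. Suppose there exists t* ∈ (0,∞) such that f/g is strictly increasing on (0,t*) and strictly decreasing on (t*,∞), and suppose the limit L = lim_{x→0⁺} ( (F′(x)/G′(x))·G(x) − F(x) ) exists. Then F/G is decreasing on (0,∞) if and only if L ≥ 0. -/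
open Real Filter Set MeasureTheory Topology

set_option maxHeartbeats 2000000

lemma lt_aux_texp (δ : ℝ) (hδ : 0 < δ) (t : ℝ) (ht : 0 ≤ t) :
    t * Real.exp (-δ * t) ≤ 1 / δ := by
  have h1 : δ * t ≤ Real.exp (δ * t) := by nlinarith [Real.add_one_le_exp (δ*t)]
  rw [le_div_iff₀ hδ]
  calc t * Real.exp (-δ*t) * δ = (δ*t)/Real.exp (δ*t) := by
        rw [neg_mul, Real.exp_neg]; field_simp
    _ ≤ 1 := by rw [div_le_one (Real.exp_pos _)]; exact h1

set_option maxHeartbeats 1000000 in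
lemma lt_int_mul (φ : ℝ → ℝ) (hφ : ContinuousOn φ (Ioi 0))
    (hint : ∀ x > (0 : ℝ), IntegrableOn (fun t => φ t * Real.exp (-x * t)) (Ioi 0))
    (x : ℝ) (hx : 0 < x) :
    IntegrableOn (fun t => (-t * φ t) * Real.exp (-x * t)) (Ioi 0) := by
  have h2 : (0:ℝ) < x/2 := by linarith
  have hbint : Integrable (fun t => (2/x) * ‖φ t * Real.exp (-(x/2) * t)‖)
      (volume.restrict (Ioi (0:ℝ))) := ((hint (x/2) h2).norm).const_mul _
  refine Integrable.mono' hbint ?_ ?_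
  · apply ContinuousOn.aestronglyMeasurable ?_ measurableSet_Ioi
    exact ((continuousOn_id.neg.mul hφ).mul
      (((continuousOn_const (c := -x)).mul continuousOn_id).rexp))
  · filter_upwards [ae_restrict_mem measurableSet_Ioi] with t ht
    have ht0 : (0:ℝ) < t := ht
    have key : t * Real.exp (-(x/2) * t) ≤ 2/x := by
      have h := lt_aux_texp (x/2) h2 t ht0.le
      calc t * Real.exp (-(x/2)*t) ≤ 1/(x/2) := h
        _ = 2/x := by rw [one_div_div]
    have hexp : Real.exp (-x * t) = Real.exp (-(x/2) * t) * Real.exp (-(x/2)*t) := by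
      rw [← Real.exp_add]; ring_nf
    rw [Real.norm_eq_abs, abs_mul, abs_mul, abs_neg, abs_of_pos ht0,
      abs_of_pos (Real.exp_pos _), hexp]
    have heq : t * |φ t| * (Real.exp (-(x/2)*t) * Real.exp (-(x/2)*t))
        = (t * Real.exp (-(x/2)*t)) * (|φ t| * Real.exp (-(x/2)*t)) := by ring
    rw [heq]
    calc (t * Real.exp (-(x/2)*t)) * (|φ t| * Real.exp (-(x/2)*t))
        ≤ (2/x) * (|φ t| * Real.exp (-(x/2)*t)) := by
          apply mul_le_mul_of_nonneg_right key (by positivity)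
      _ = (2/x) * ‖φ t * Real.exp (-(x/2)*t)‖ := by
          rw [Real.norm_eq_abs, abs_mul, abs_of_pos (Real.exp_pos _)]

set_option maxHeartbeats 1000000 in
lemma lt_hasDerivAt (φ : ℝ → ℝ) (hφ : ContinuousOn φ (Ioi 0))
    (hint : ∀ x > (0 : ℝ), IntegrableOn (fun t => φ t * Real.exp (-x * t)) (Ioi 0))
    (x : ℝ) (hx : 0 < x) :
    HasDerivAt (fun y => ∫ t in Ioi (0:ℝ), φ t * Real.exp (-y * t))
      (∫ t in Ioi (0:ℝ), (-t * φ t) * Real.exp (-x * t)) x := by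
  have h2 : (0:ℝ) < x/2 := by linarith
  have hmeas : ∀ y : ℝ, AEStronglyMeasurable (fun t => φ t * Real.exp (-y * t))
      (volume.restrict (Ioi (0:ℝ))) := fun y => by
    apply ContinuousOn.aestronglyMeasurable ?_ measurableSet_Ioi
    exact hφ.mul (((continuousOn_const (c := -y)).mul continuousOn_id).rexp)
  have hmeas' : ∀ y : ℝ, AEStronglyMeasurable (fun t => (-t * φ t) * Real.exp (-y * t))
      (volume.restrict (Ioi (0:ℝ))) := fun y => by
    apply ContinuousOn.aestronglyMeasurable ?_ measurableSet_Ioi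
    exact (continuousOn_id.neg.mul hφ).mul
      (((continuousOn_const (c := -y)).mul continuousOn_id).rexp)
  have key := hasDerivAt_integral_of_dominated_loc_of_deriv_le (μ := volume.restrict (Ioi (0:ℝ)))
    (F := fun y t => φ t * Real.exp (-y * t))
    (F' := fun y t => (-t * φ t) * Real.exp (-y * t))
    (bound := fun t => ‖(-t * φ t) * Real.exp (-(x/2) * t)‖)
    (Metric.ball_mem_nhds x h2) (Eventually.of_forall hmeas) (hint x hx) (hmeas' x) ?_
    (lt_int_mul φ hφ hint (x/2) h2).norm ?_
  · exact key.2
  · filter_upwards [ae_restrict_mem measurableSet_Ioi] with t ht y hy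
    have ht0 : (0:ℝ) < t := ht
    have hy2 : x/2 < y := by
      have := abs_lt.1 (mem_ball_iff_norm.1 hy)
      linarith [this.1]
    rw [Real.norm_eq_abs, Real.norm_eq_abs, abs_mul, abs_mul, abs_mul, abs_mul,
      abs_of_pos (Real.exp_pos _), abs_of_pos (Real.exp_pos _)]
    apply mul_le_mul_of_nonneg_left _ (by positivity)
    exact Real.exp_le_exp.2 (by nlinarith)
  · filter_upwards [ae_restrict_mem measurableSet_Ioi] with t ht y hy
    have hd : HasDerivAt (fun y : ℝ => φ t * Real.exp (-y * t))
        (φ t * (Real.exp (-y * t) * (-1 * t))) y :=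
      (((hasDerivAt_id y).neg.mul_const t).exp).const_mul (φ t)
    exact hd.congr_deriv (by ring)

lemma lt_int_pos (h : ℝ → ℝ) (hint : IntegrableOn h (Ioi (0:ℝ)))
    (hpos : ∀ t ∈ Ioi (0:ℝ), 0 < h t) : 0 < ∫ t in Ioi (0:ℝ), h t := by
  have hae : 0 ≤ᶠ[ae (volume.restrict (Ioi (0:ℝ)))] h := by
    filter_upwards [ae_restrict_mem measurableSet_Ioi] with t ht
    exact (hpos t ht).le
  rw [setIntegral_pos_iff_support_of_nonneg_ae hae hint]
  have hsub : Ioi (0:ℝ) ⊆ Function.support h ∩ Ioi 0 := fun t ht => ⟨(hpos t ht).ne', ht⟩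
  calc (0:ENNReal) < volume (Ioi (0:ℝ)) := by simp [Real.volume_Ioi]
    _ ≤ _ := measure_mono hsub

lemma lt_int_neg (h : ℝ → ℝ) (hint : IntegrableOn h (Ioi (0:ℝ))) (b : ℝ) (hb : 0 ≤ b)
    (hnonpos : ∀ t ∈ Ioi (0:ℝ), h t ≤ 0) (hneg : ∀ t ∈ Ioi b, h t < 0) :
    (∫ t in Ioi (0:ℝ), h t) < 0 := by
  have h1 : 0 < ∫ t in Ioi (0:ℝ), -h t := by
    have hae : 0 ≤ᶠ[ae (volume.restrict (Ioi (0:ℝ)))] (fun s => -h s) := by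
      filter_upwards [ae_restrict_mem measurableSet_Ioi] with t ht
      simpa using hnonpos t ht
    rw [setIntegral_pos_iff_support_of_nonneg_ae hae hint.neg]
    have hsub : Ioi b ⊆ Function.support (fun s => -h s) ∩ Ioi 0 := fun t ht => by
      refine ⟨?_, lt_of_le_of_lt hb ht⟩
      simpa using (hneg t ht).ne
    calc (0:ENNReal) < volume (Ioi b) := by simp [Real.volume_Ioi]
      _ ≤ _ := measure_mono hsub
  rw [integral_neg] at h1
  linarith

lemma lt_int_pos' (h : ℝ → ℝ) (hint : IntegrableOn h (Ioi (0:ℝ))) (b : ℝ) (hb : 0 ≤ b)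
    (hnonneg : ∀ t ∈ Ioi (0:ℝ), 0 ≤ h t) (hpos : ∀ t ∈ Ioi b, 0 < h t) :
    0 < ∫ t in Ioi (0:ℝ), h t := by
  have h1 := lt_int_neg (fun s => -h s) hint.neg b hb
    (fun t ht => by simpa using hnonneg t ht) (fun t ht => by simpa using hpos t ht)
  rw [integral_neg] at h1
  linarith

lemma lt_expand_int (φ : ℝ → ℝ) (hφ : ContinuousOn φ (Ioi 0))
    (hint : ∀ x > (0 : ℝ), IntegrableOn (fun t => φ t * Real.exp (-x * t)) (Ioi 0))
    (x : ℝ) (hx : 0 < x) (p q r : ℝ) :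
    IntegrableOn (fun s => ((p * s^2 + q * s + r) * φ s) * Real.exp (-x * s)) (Ioi 0) := by
  have hφ1 : ContinuousOn (fun t => -t * φ t) (Ioi 0) := continuousOn_id.neg.mul hφ
  have h0 := hint x hx
  have h1 := lt_int_mul φ hφ hint x hx
  have h2 := lt_int_mul _ hφ1 (fun y hy => lt_int_mul φ hφ hint y hy) x hx
  have heq : (fun s => ((p * s^2 + q * s + r) * φ s) * Real.exp (-x * s))
      = fun s => (p * ((-s * (-s * φ s)) * Real.exp (-x*s)) - q * ((-s * φ s) * Real.exp (-x*s)))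
          + r * (φ s * Real.exp (-x*s)) := by
    funext s; ring
  rw [heq]
  exact ((h2.const_mul p).sub (h1.const_mul q)).add (h0.const_mul r)

lemma lt_expand (φ : ℝ → ℝ) (hφ : ContinuousOn φ (Ioi 0))
    (hint : ∀ x > (0 : ℝ), IntegrableOn (fun t => φ t * Real.exp (-x * t)) (Ioi 0))
    (x : ℝ) (hx : 0 < x) (p q r : ℝ) :
    ∫ s in Ioi (0:ℝ), ((p * s^2 + q * s + r) * φ s) * Real.exp (-x * s)
      = p * (∫ s in Ioi (0:ℝ), (-s * (-s * φ s)) * Real.exp (-x * s))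
        - q * (∫ s in Ioi (0:ℝ), (-s * φ s) * Real.exp (-x * s))
        + r * (∫ s in Ioi (0:ℝ), φ s * Real.exp (-x * s)) := by
  have hφ1 : ContinuousOn (fun t => -t * φ t) (Ioi 0) := continuousOn_id.neg.mul hφ
  have h0 := hint x hx
  have h1 := lt_int_mul φ hφ hint x hx
  have h2 := lt_int_mul _ hφ1 (fun y hy => lt_int_mul φ hφ hint y hy) x hx
  have heq : (fun s => ((p * s^2 + q * s + r) * φ s) * Real.exp (-x * s))
      = fun s => (p * ((-s * (-s * φ s)) * Real.exp (-x*s)) - q * ((-s * φ s) * Real.exp (-x*s)))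
          + r * (φ s * Real.exp (-x*s)) := by
    funext s; ring
  have hsub : IntegrableOn (fun s => p * ((-s * (-s * φ s)) * Real.exp (-x*s))
      - q * ((-s * φ s) * Real.exp (-x*s))) (Ioi (0:ℝ)) :=
    (h2.const_mul p).sub (h1.const_mul q)
  rw [heq, integral_add hsub (h0.const_mul r),
    integral_sub (h2.const_mul p) (h1.const_mul q), integral_const_mul, integral_const_mul,
    integral_const_mul]

lemma lt_expand2_int (f g : ℝ → ℝ) (hf : ContinuousOn f (Ioi 0)) (hg : ContinuousOn g (Ioi 0))
    (hfint : ∀ x > (0 : ℝ), IntegrableOn (fun t => f t * Real.exp (-x * t)) (Ioi 0))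
    (hgint : ∀ x > (0 : ℝ), IntegrableOn (fun t => g t * Real.exp (-x * t)) (Ioi 0))
    (x : ℝ) (hx : 0 < x) (p q r c : ℝ) :
    IntegrableOn (fun s => ((p * s^2 + q * s + r) * (f s - c * g s)) * Real.exp (-x * s))
      (Ioi 0) := by
  have heq : (fun s => ((p * s^2 + q * s + r) * (f s - c * g s)) * Real.exp (-x * s))
      = fun s => ((p * s^2 + q * s + r) * f s) * Real.exp (-x * s)
          - c * (((p * s^2 + q * s + r) * g s) * Real.exp (-x * s)) := by
    funext s; ring
  rw [heq]
  exact (lt_expand_int f hf hfint x hx p q r).sub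
    ((lt_expand_int g hg hgint x hx p q r).const_mul c)

lemma lt_expand2 (f g : ℝ → ℝ) (hf : ContinuousOn f (Ioi 0)) (hg : ContinuousOn g (Ioi 0))
    (hfint : ∀ x > (0 : ℝ), IntegrableOn (fun t => f t * Real.exp (-x * t)) (Ioi 0))
    (hgint : ∀ x > (0 : ℝ), IntegrableOn (fun t => g t * Real.exp (-x * t)) (Ioi 0))
    (x : ℝ) (hx : 0 < x) (p q r c : ℝ) :
    ∫ s in Ioi (0:ℝ), ((p * s^2 + q * s + r) * (f s - c * g s)) * Real.exp (-x * s)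
      = (p * (∫ s in Ioi (0:ℝ), (-s * (-s * f s)) * Real.exp (-x * s))
          - q * (∫ s in Ioi (0:ℝ), (-s * f s) * Real.exp (-x * s))
          + r * (∫ s in Ioi (0:ℝ), f s * Real.exp (-x * s)))
        - c * (p * (∫ s in Ioi (0:ℝ), (-s * (-s * g s)) * Real.exp (-x * s))
          - q * (∫ s in Ioi (0:ℝ), (-s * g s) * Real.exp (-x * s))
          + r * (∫ s in Ioi (0:ℝ), g s * Real.exp (-x * s))) := by
  have heq : (fun s => ((p * s^2 + q * s + r) * (f s - c * g s)) * Real.exp (-x * s))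
      = fun s => ((p * s^2 + q * s + r) * f s) * Real.exp (-x * s)
          - c * (((p * s^2 + q * s + r) * g s) * Real.exp (-x * s)) := by
    funext s; ring
  rw [heq, integral_sub (lt_expand_int f hf hfint x hx p q r)
      ((lt_expand_int g hg hgint x hx p q r).const_mul c),
    integral_const_mul, lt_expand f hf hfint x hx p q r, lt_expand g hg hgint x hx p q r]

set_option maxHeartbeats 2000000

section
variable (f g : ℝ → ℝ)

lemma lt_key (f g : ℝ → ℝ) (hf : ContinuousOn f (Ioi 0)) (hg : ContinuousOn g (Ioi 0))
    (hgpos : ∀ t ∈ Ioi (0 : ℝ), 0 < g t)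
    (hfint : ∀ x > (0 : ℝ), IntegrableOn (fun t => f t * Real.exp (-x * t)) (Ioi 0))
    (hgint : ∀ x > (0 : ℝ), IntegrableOn (fun t => g t * Real.exp (-x * t)) (Ioi 0))
    (tstar : ℝ) (htstar : tstar ∈ Ioi (0 : ℝ))
    (hinc : StrictMonoOn (fun t => f t / g t) (Ioo 0 tstar))
    (hdec : StrictAntiOn (fun t => f t / g t) (Ioi tstar))
    (x : ℝ) (hx : 0 < x) (c : ℝ)
    (hc : (∫ t in Ioi (0:ℝ), (-t * f t) * Real.exp (-x*t))
        = c * ∫ t in Ioi (0:ℝ), (-t * g t) * Real.exp (-x*t))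
    (hH : 0 ≤ (∫ t in Ioi (0:ℝ), f t * Real.exp (-x*t))
        - c * ∫ t in Ioi (0:ℝ), g t * Real.exp (-x*t)) :
    (∫ t in Ioi (0:ℝ), (-t * (-t * f t)) * Real.exp (-x*t))
      - c * (∫ t in Ioi (0:ℝ), (-t * (-t * g t)) * Real.exp (-x*t)) < 0 := by
  have ht0 : (0:ℝ) < tstar := htstar
  have hu_neg : ∀ s, 0 < s → f s / g s < c → f s - c * g s < 0 := by
    intro s hs h
    have hg' := hgpos s hs
    rw [div_lt_iff₀ hg'] at h
    linarith
  have hu_nonneg : ∀ s, 0 < s → c ≤ f s / g s → 0 ≤ f s - c * g s := by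
    intro s hs h
    have hg' := hgpos s hs
    rw [le_div_iff₀ hg'] at h
    linarith
  have hu_pos : ∀ s, 0 < s → c < f s / g s → 0 < f s - c * g s := by
    intro s hs h
    have hg' := hgpos s hs
    rw [lt_div_iff₀ hg'] at h
    linarith
  have hqc : ContinuousOn (fun t => f t / g t) (Ioi 0) :=
    hf.div hg (fun t ht => (hgpos t ht).ne')
  -- strict maximum at tstar
  have hmax : ∀ s ∈ Ioi (0:ℝ), s ≠ tstar → f s / g s < f tstar / g tstar := by
    intro s hs hne
    have hs0 : (0:ℝ) < s := hs
    rcases lt_or_gt_of_ne hne with h | h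
    · set s' := (s + tstar)/2 with hs'def
      have hss' : s < s' := by simp only [hs'def]; linarith
      have hs't : s' < tstar := by simp only [hs'def]; linarith
      have hs'0 : (0:ℝ) < s' := by linarith
      have h1 : f s / g s < f s' / g s' := hinc ⟨hs0, h⟩ ⟨hs'0, hs't⟩ hss'
      have h2 : f s' / g s' ≤ f tstar / g tstar := by
        have hcw : ContinuousWithinAt (fun t => f t / g t) (Ioo s' tstar) tstar :=
          (hqc tstar htstar).mono (fun w hw => lt_trans hs'0 hw.1)
        haveI hnb : (𝓝[Ioo s' tstar] tstar).NeBot := by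
          apply mem_closure_iff_nhdsWithin_neBot.1
          rw [closure_Ioo (ne_of_lt hs't)]
          exact ⟨hs't.le, le_rfl⟩
        apply ge_of_tendsto hcw
        filter_upwards [self_mem_nhdsWithin] with w hw
        exact (hinc ⟨hs'0, hs't⟩ ⟨lt_trans hs'0 hw.1, hw.2⟩ hw.1).le
      linarith
    · set s' := (tstar + s)/2 with hs'def
      have hts' : tstar < s' := by simp only [hs'def]; linarith
      have hs's : s' < s := by simp only [hs'def]; linarith
      have h1 : f s / g s < f s' / g s' := hdec hts' (lt_trans hts' hs's) hs's
      have h2 : f s' / g s' ≤ f tstar / g tstar := by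
        have hcw : ContinuousWithinAt (fun t => f t / g t) (Ioo tstar s') tstar :=
          (hqc tstar htstar).mono (fun w hw => lt_trans ht0 hw.1)
        haveI hnb : (𝓝[Ioo tstar s'] tstar).NeBot := by
          apply mem_closure_iff_nhdsWithin_neBot.1
          rw [closure_Ioo (ne_of_lt hts')]
          exact ⟨le_rfl, hts'.le⟩
        apply ge_of_tendsto hcw
        filter_upwards [self_mem_nhdsWithin] with w hw
        exact (hdec hw.1 (lt_trans hw.1 hw.2) hw.2).le
      linarith
  by_cases hcase : ∀ s ∈ Ioi (0:ℝ), f s / g s < c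
  · exfalso
    have hsignpos : ∀ s ∈ Ioi (0:ℝ),
        0 < ((0 * s^2 + (-1) * s + 0) * (f s - c * g s)) * Real.exp (-x*s) := by
      intro s hs
      have hs0 : (0:ℝ) < s := hs
      have hu := hu_neg s hs0 (hcase s hs)
      have : (0:ℝ) < (-s) * (f s - c * g s) := mul_pos_of_neg_of_neg (by linarith) hu
      have he := Real.exp_pos (-x*s)
      nlinarith
    have hpos := lt_int_pos _ (lt_expand2_int f g hf hg hfint hgint x hx 0 (-1) 0 c) hsignpos
    rw [lt_expand2 f g hf hg hfint hgint x hx 0 (-1) 0 c] at hpos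
    nlinarith [hpos, hc]
  · push_neg at hcase
    obtain ⟨s₀, hs₀, hs₀c⟩ := hcase
    have hct : c ≤ f tstar / g tstar := by
      rcases eq_or_ne s₀ tstar with rfl | hne
      · exact hs₀c
      · exact le_of_lt (lt_of_le_of_lt hs₀c (hmax s₀ hs₀ hne))
    set A := {s : ℝ | s ∈ Ioi (0:ℝ) ∧ c ≤ f s / g s} with hA
    have hAne : A.Nonempty := ⟨s₀, hs₀, hs₀c⟩
    have htA : tstar ∈ A := ⟨htstar, hct⟩
    have hAbdd : BddBelow A := ⟨0, fun s hs => le_of_lt hs.1⟩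
    set a := sInf A with ha
    have ha0 : 0 ≤ a := le_csInf hAne (fun s hs => le_of_lt hs.1)
    have hat : a ≤ tstar := csInf_le hAbdd htA
    have h_below : ∀ s, 0 < s → s < a → f s / g s < c := by
      intro s hs hsa
      by_contra hcon
      push_neg at hcon
      exact absurd (csInf_le hAbdd ⟨hs, hcon⟩) (not_le.2 hsa)
    have h_midl : ∀ s, a < s → s ≤ tstar → c ≤ f s / g s := by
      intro s has hst
      obtain ⟨s', hs'A, hs's⟩ := exists_lt_of_csInf_lt hAne has
      rcases eq_or_lt_of_le hst with rfl | hlt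
      · exact hct
      · have hs'0 : (0:ℝ) < s' := hs'A.1
        have := hinc ⟨hs'0, lt_trans hs's hlt⟩ ⟨lt_trans hs'0 hs's, hlt⟩ hs's
        have hcs' : c ≤ f s' / g s' := hs'A.2
        linarith
    by_cases hbdd : BddAbove A
    · -- bounded case
      set b := sSup A with hb
      have htb : tstar ≤ b := le_csSup hbdd htA
      have hb0 : (0:ℝ) < b := lt_of_lt_of_le ht0 htb
      have h_above : ∀ s, b < s → f s / g s < c := by
        intro s hbs
        by_contra hcon
        push_neg at hcon
        exact absurd (le_csSup hbdd ⟨lt_trans hb0 hbs, hcon⟩) (not_le.2 hbs)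
      have h_midr : ∀ s, tstar ≤ s → s < b → c ≤ f s / g s := by
        intro s hts hsb
        obtain ⟨s'', hs''A, hss''⟩ := exists_lt_of_lt_csSup hAne hsb
        rcases eq_or_lt_of_le hts with rfl | hlt
        · exact hct
        · have := hdec hlt (lt_trans hlt hss'') hss''
          have hcs'' : c ≤ f s'' / g s'' := hs''A.2
          linarith
      have hsign : ∀ s ∈ Ioi (0:ℝ),
          ((1 * s^2 + (-(a+b)) * s + a*b) * (f s - c * g s)) * Real.exp (-x*s) ≤ 0 := by
        intro s hs
        have hs0 : (0:ℝ) < s := hs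
        have he := Real.exp_pos (-x*s)
        have hfac : (1 * s^2 + (-(a+b)) * s + a*b) = (s - a) * (s - b) := by ring
        rw [hfac]
        rcases lt_trichotomy s a with h1 | h1 | h1
        · have hu := hu_neg s hs0 (h_below s hs0 h1)
          have hp : 0 < (s-a)*(s-b) :=
            mul_pos_of_neg_of_neg (by linarith) (by linarith)
          exact le_of_lt (mul_neg_of_neg_of_pos (mul_neg_of_pos_of_neg hp hu) he)
        · have : s - a = 0 := by rw [h1]; ring
          rw [this]
          simp
        · rcases lt_trichotomy s b with h2 | h2 | h2
          · have hqs : c ≤ f s / g s := by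
              rcases le_or_gt s tstar with h3 | h3
              · exact h_midl s h1 h3
              · exact h_midr s h3.le h2
            have hu := hu_nonneg s hs0 hqs
            have hfle : (s-a)*(s-b) ≤ 0 := by nlinarith [mul_pos (sub_pos.2 h1) (sub_pos.2 h2)]
            exact mul_nonpos_of_nonpos_of_nonneg
              (mul_nonpos_of_nonpos_of_nonneg hfle hu) he.le
          · have : s - b = 0 := by rw [h2]; ring
            rw [this]
            simp
          · have hu := hu_neg s hs0 (h_above s h2)
            have hp : 0 < (s-a)*(s-b) := mul_pos (by linarith) (by linarith)
            exact le_of_lt (mul_neg_of_neg_of_pos (mul_neg_of_pos_of_neg hp hu) he)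
      have hstrict : ∀ s ∈ Ioi b,
          ((1 * s^2 + (-(a+b)) * s + a*b) * (f s - c * g s)) * Real.exp (-x*s) < 0 := by
        intro s hsb
        have hs0 : (0:ℝ) < s := lt_trans hb0 hsb
        have he := Real.exp_pos (-x*s)
        have hfac : (1 * s^2 + (-(a+b)) * s + a*b) = (s - a) * (s - b) := by ring
        rw [hfac]
        have hbs : b < s := hsb
        have hu := hu_neg s hs0 (h_above s hbs)
        have hp : 0 < (s-a)*(s-b) := mul_pos (by linarith) (by linarith)
        exact mul_neg_of_neg_of_pos (mul_neg_of_pos_of_neg hp hu) he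
      have hJ2 := lt_int_neg _ (lt_expand2_int f g hf hg hfint hgint x hx 1 (-(a+b)) (a*b) c)
        b hb0.le hsign hstrict
      rw [lt_expand2 f g hf hg hfint hgint x hx 1 (-(a+b)) (a*b) c] at hJ2
      have hab : 0 ≤ a * b := mul_nonneg ha0 hb0.le
      nlinarith [hJ2, hc, hH, hab, mul_nonneg hab hH]
    · -- unbounded case : contradiction
      exfalso
      rw [not_bddAbove_iff] at hbdd
      have h_right : ∀ s, tstar < s → c < f s / g s := by
        intro s hts
        obtain ⟨s'', hs''A, hss''⟩ := hbdd s
        have := hdec hts (lt_trans hts hss'') hss''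
        have hcs'' : c ≤ f s'' / g s'' := hs''A.2
        linarith
      have hsign : ∀ s ∈ Ioi (0:ℝ),
          0 ≤ ((0 * s^2 + 1 * s + (-a)) * (f s - c * g s)) * Real.exp (-x*s) := by
        intro s hs
        have hs0 : (0:ℝ) < s := hs
        have he := Real.exp_pos (-x*s)
        have hfac : (0 * s^2 + 1 * s + (-a)) = s - a := by ring
        rw [hfac]
        rcases lt_trichotomy s a with h1 | h1 | h1
        · have hu := hu_neg s hs0 (h_below s hs0 h1)
          exact mul_nonneg (mul_pos_of_neg_of_neg (by linarith : s - a < 0) hu).le he.le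
        · have : s - a = 0 := by rw [h1]; ring
          rw [this]; simp
        · have hqs : c ≤ f s / g s := by
            rcases le_or_gt s tstar with h3 | h3
            · exact h_midl s h1 h3
            · exact (h_right s h3).le
          have hu := hu_nonneg s hs0 hqs
          exact mul_nonneg (mul_nonneg (by linarith : (0:ℝ) ≤ s - a) hu) he.le
      have hstrict : ∀ s ∈ Ioi tstar,
          0 < ((0 * s^2 + 1 * s + (-a)) * (f s - c * g s)) * Real.exp (-x*s) := by
        intro s hts
        have hts' : tstar < s := hts
        have hs0 : (0:ℝ) < s := lt_trans ht0 hts'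
        have he := Real.exp_pos (-x*s)
        have hfac : (0 * s^2 + 1 * s + (-a)) = s - a := by ring
        rw [hfac]
        have hu := hu_pos s hs0 (h_right s hts')
        have hsa : 0 < s - a := by nlinarith [lt_of_le_of_lt hat hts']
        positivity
      have hJ1 := lt_int_pos' _ (lt_expand2_int f g hf hg hfint hgint x hx 0 1 (-a) c)
        tstar ht0.le hsign hstrict
      rw [lt_expand2 f g hf hg hfint hgint x hx 0 1 (-a) c] at hJ1
      nlinarith [hJ1, hc, hH, ha0, mul_nonneg ha0 hH]

end

theorem stmt_3 (f g : ℝ → ℝ)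
    (hf : ContinuousOn f (Ioi 0)) (hg : ContinuousOn g (Ioi 0))
    (hgpos : ∀ t ∈ Ioi (0 : ℝ), 0 < g t)
    (hfint : ∀ x > (0 : ℝ), IntegrableOn (fun t => f t * Real.exp (-x * t)) (Ioi 0))
    (hgint : ∀ x > (0 : ℝ), IntegrableOn (fun t => g t * Real.exp (-x * t)) (Ioi 0))
    (F G : ℝ → ℝ)
    (hF : ∀ x, F x = ∫ t in Ioi (0 : ℝ), f t * Real.exp (-x * t))
    (hG : ∀ x, G x = ∫ t in Ioi (0 : ℝ), g t * Real.exp (-x * t))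
    (tstar : ℝ) (htstar : tstar ∈ Ioi (0 : ℝ))
    (hinc : StrictMonoOn (fun t => f t / g t) (Ioo 0 tstar))
    (hdec : StrictAntiOn (fun t => f t / g t) (Ioi tstar))
    (L : ℝ)
    (hL : Tendsto (fun x => deriv F x / deriv G x * G x - F x)
      (𝓝[>] (0 : ℝ)) (𝓝 L)) :
    AntitoneOn (fun x => F x / G x) (Ioi 0) ↔ 0 ≤ L := by
  have hf1c : ContinuousOn (fun t => -t * f t) (Ioi (0:ℝ)) := continuousOn_id.neg.mul hf
  have hg1c : ContinuousOn (fun t => -t * g t) (Ioi (0:ℝ)) := continuousOn_id.neg.mul hg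
  have hf1int : ∀ x > (0:ℝ), IntegrableOn (fun t => (-t * f t) * Real.exp (-x*t)) (Ioi 0) :=
    fun x hx => lt_int_mul f hf hfint x hx
  have hg1int : ∀ x > (0:ℝ), IntegrableOn (fun t => (-t * g t) * Real.exp (-x*t)) (Ioi 0) :=
    fun x hx => lt_int_mul g hg hgint x hx
  set F1 : ℝ → ℝ := fun x => ∫ t in Ioi (0:ℝ), (-t * f t) * Real.exp (-x*t) with hF1
  set G1 : ℝ → ℝ := fun x => ∫ t in Ioi (0:ℝ), (-t * g t) * Real.exp (-x*t) with hG1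
  set F2 : ℝ → ℝ := fun x => ∫ t in Ioi (0:ℝ), (-t * (-t * f t)) * Real.exp (-x*t) with hF2
  set G2 : ℝ → ℝ := fun x => ∫ t in Ioi (0:ℝ), (-t * (-t * g t)) * Real.exp (-x*t) with hG2
  have hFd : ∀ x, 0 < x → HasDerivAt F (F1 x) x := by
    intro x hx
    have h := lt_hasDerivAt f hf hfint x hx
    have hFfun : F = fun y => ∫ t in Ioi (0:ℝ), f t * Real.exp (-y * t) := funext hF
    rw [hFfun]; exact h
  have hGd : ∀ x, 0 < x → HasDerivAt G (G1 x) x := by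
    intro x hx
    have h := lt_hasDerivAt g hg hgint x hx
    have hGfun : G = fun y => ∫ t in Ioi (0:ℝ), g t * Real.exp (-y * t) := funext hG
    rw [hGfun]; exact h
  have hF1d : ∀ x, 0 < x → HasDerivAt F1 (F2 x) x :=
    fun x hx => lt_hasDerivAt _ hf1c hf1int x hx
  have hG1d : ∀ x, 0 < x → HasDerivAt G1 (G2 x) x :=
    fun x hx => lt_hasDerivAt _ hg1c hg1int x hx
  have hGpos : ∀ x, 0 < x → 0 < G x := by
    intro x hx
    rw [hG]
    exact lt_int_pos _ (hgint x hx)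
      (fun t ht => mul_pos (hgpos t ht) (Real.exp_pos _))
  have hG1neg : ∀ x, 0 < x → G1 x < 0 := by
    intro x hx
    apply lt_int_neg _ (hg1int x hx) 0 le_rfl
    · intro t ht
      have ht0 : (0:ℝ) < t := ht
      exact (mul_neg_of_neg_of_pos
        (mul_neg_of_neg_of_pos (neg_neg_iff_pos.2 ht0) (hgpos t ht)) (Real.exp_pos _)).le
    · intro t ht
      have ht0 : (0:ℝ) < t := ht
      exact mul_neg_of_neg_of_pos
        (mul_neg_of_neg_of_pos (neg_neg_iff_pos.2 ht0) (hgpos t ht)) (Real.exp_pos _)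
  set H : ℝ → ℝ := fun x => F1 x / G1 x * G x - F x with hHdef
  have hHL : Tendsto H (𝓝[>] (0:ℝ)) (𝓝 L) := by
    apply hL.congr'
    filter_upwards [self_mem_nhdsWithin] with x hx
    have hx0 : (0:ℝ) < x := hx
    rw [(hFd x hx0).deriv, (hGd x hx0).deriv]
  have hHd : ∀ x, 0 < x →
      HasDerivAt H ((F2 x * G1 x - F1 x * G2 x) / (G1 x)^2 * G x) x := by
    intro x hx
    have h2 : HasDerivAt H ((F2 x * G1 x - F1 x * G2 x) / (G1 x)^2 * G x
        + F1 x / G1 x * G1 x - F1 x) x :=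
      (((hF1d x hx).div (hG1d x hx) (hG1neg x hx).ne).mul (hGd x hx)).sub (hFd x hx)
    have hval : (F2 x * G1 x - F1 x * G2 x) / (G1 x)^2 * G x
        + F1 x / G1 x * G1 x - F1 x = (F2 x * G1 x - F1 x * G2 x) / (G1 x)^2 * G x := by
      rw [div_mul_cancel₀ _ (hG1neg x hx).ne]
      ring
    rw [hval] at h2
    exact h2
  have hHkey : ∀ x, 0 < x → H x ≤ 0 → 0 < F2 x * G1 x - F1 x * G2 x := by
    intro x hx hHx
    have hne := (hG1neg x hx).ne
    have hc' : F1 x / G1 x * G1 x = F1 x := div_mul_cancel₀ _ hne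
    have hHx' : F1 x / G1 x * G x - F x ≤ 0 := hHx
    have key := lt_key f g hf hg hgpos hfint hgint tstar htstar hinc hdec x hx (F1 x / G1 x)
      (by exact hc'.symm) (by rw [← hF x, ← hG x]; linarith)
    have key' : F2 x - F1 x / G1 x * G2 x < 0 := key
    clear key
    have hprod := mul_pos_of_neg_of_neg (hG1neg x hx) key'
    have hc2 : F1 x * G2 x = F1 x / G1 x * G1 x * G2 x := by rw [hc']
    nlinarith [hprod, hc2]
  have hFGd : ∀ x, 0 < x → HasDerivAt (fun y => F y / G y)
      ((F1 x * G x - F x * G1 x) / (G x)^2) x :=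
    fun x hx => (hFd x hx).div (hGd x hx) (hGpos x hx).ne'
  constructor
  · intro hA
    have hHnonneg : ∀ x, 0 < x → 0 ≤ H x := by
      intro x hx
      have hd := hFGd x hx
      have hslope : Tendsto (slope (fun y => F y / G y) x) (𝓝[>] x)
          (𝓝 ((F1 x * G x - F x * G1 x) / (G x)^2)) :=
        (hasDerivAt_iff_tendsto_slope.1 hd).mono_left
          (nhdsWithin_mono x (fun w hw => ne_of_gt hw))
      have hle : (F1 x * G x - F x * G1 x) / (G x)^2 ≤ 0 := by
        apply le_of_tendsto hslope
        filter_upwards [self_mem_nhdsWithin] with w hw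
        have hw' : x < w := hw
        rw [slope_def_field]
        apply div_nonpos_of_nonpos_of_nonneg _ (by linarith)
        have := hA (mem_Ioi.2 hx) (mem_Ioi.2 (lt_trans hx hw')) hw'.le
        simpa using sub_nonpos.2 this
      have h1 := hGpos x hx
      have h2 := hG1neg x hx
      have hnum : F1 x * G x - F x * G1 x ≤ 0 := by
        by_contra hcon
        push_neg at hcon
        have := div_pos hcon (by positivity : (0:ℝ) < (G x)^2)
        linarith
      have hq : F1 x / G1 x * G x - F x = (F1 x * G x - F x * G1 x) / G1 x := by
        field_simp [h2.ne]
      show 0 ≤ F1 x / G1 x * G x - F x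
      rw [hq]
      exact div_nonneg_iff.2 (Or.inr ⟨hnum, h2.le⟩)
    exact ge_of_tendsto hHL
      (by filter_upwards [self_mem_nhdsWithin] with x hx; exact hHnonneg x hx)
  · intro hL0
    have hHnonneg : ∀ x, 0 < x → 0 ≤ H x := by
      by_contra hcon
      push_neg at hcon
      obtain ⟨x₁, hx₁, hHx₁⟩ := hcon
      have hclaim : ∀ y, 0 < y → y < x₁ → H y ≤ H x₁ := by
        intro y hy hyx
        by_contra hy'
        push_neg at hy'
        have hHcont : ContinuousOn H (Icc y x₁) := fun w hw =>
          ((hHd w (lt_of_lt_of_le hy hw.1)).continuousAt).continuousWithinAt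
        set S := Icc y x₁ ∩ H ⁻¹' (Iic (H x₁)) with hS
        have hSclosed : IsClosed S :=
          hHcont.preimage_isClosed_of_isClosed isClosed_Icc isClosed_Iic
        have hSne : S.Nonempty := ⟨x₁, ⟨hyx.le, le_rfl⟩, Set.mem_preimage.2 (mem_Iic.2 le_rfl)⟩
        have hSbdd : BddBelow S := ⟨y, fun w hw => hw.1.1⟩
        set z := sInf S with hz
        have hzS : z ∈ S := hSclosed.csInf_mem hSne hSbdd
        have hzy : y < z := by
          rcases lt_or_eq_of_le hzS.1.1 with h | h
          · exact h
          · exfalso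
            have : H z ≤ H x₁ := hzS.2
            rw [← h] at this
            linarith
        have hz0 : 0 < z := lt_trans hy hzy
        have hkey := hHkey z hz0 (le_of_lt (lt_of_le_of_lt hzS.2 hHx₁))
        have hdz := hHd z hz0
        have hdpos : 0 < (F2 z * G1 z - F1 z * G2 z) / (G1 z)^2 * G z := by
          have h1 := hGpos z hz0
          have h2 := hG1neg z hz0
          have hsq : 0 < (G1 z)^2 := by nlinarith
          exact mul_pos (div_pos hkey hsq) h1
        have hslope : Tendsto (slope H z) (𝓝[<] z)
            (𝓝 ((F2 z * G1 z - F1 z * G2 z) / (G1 z)^2 * G z)) :=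
          (hasDerivAt_iff_tendsto_slope.1 hdz).mono_left
            (nhdsWithin_mono z (fun w hw => ne_of_lt hw))
        have hev1 : ∀ᶠ w in 𝓝[<] z, 0 < slope H z w :=
          hslope.eventually (eventually_gt_nhds hdpos)
        have hev2 : Ioo y z ∈ 𝓝[<] z := Ioo_mem_nhdsLT_of_mem ⟨hzy, le_rfl⟩
        obtain ⟨w, hw1, hw2⟩ := (hev1.and (eventually_of_mem hev2 fun w hw => hw)).exists
        rw [slope_def_field] at hw1
        have hwz : w - z < 0 := by linarith [hw2.2]
        have hHw : H w < H z := by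
          rcases div_pos_iff.1 hw1 with ⟨h1, h2⟩ | ⟨h1, h2⟩
          · linarith
          · linarith
        have hwS : w ∈ S := ⟨⟨hw2.1.le, le_trans hw2.2.le hzS.1.2⟩, le_trans hHw.le hzS.2⟩
        exact absurd (csInf_le hSbdd hwS) (not_le.2 hw2.2)
      have hle : L ≤ H x₁ := by
        apply le_of_tendsto hHL
        filter_upwards [Ioo_mem_nhdsGT_of_mem ⟨le_rfl, hx₁⟩] with w hw
        exact hclaim w hw.1 hw.2
      linarith
    apply antitoneOn_of_deriv_nonpos (convex_Ioi 0)
    · exact fun x hx => ((hFGd x hx).continuousAt).continuousWithinAt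
    · intro x hx
      rw [interior_Ioi] at hx
      exact ((hFGd x hx).differentiableAt).differentiableWithinAt
    · intro x hx
      rw [interior_Ioi] at hx
      rw [(hFGd x hx).deriv]
      have h1 := hGpos x hx
      have h2 := hG1neg x hx
      have h3 : (0:ℝ) ≤ F1 x / G1 x * G x - F x := hHnonneg x hx
      have hq : F1 x / G1 x * G x - F x = (F1 x * G x - F x * G1 x) / G1 x := by
        field_simp [h2.ne]
      rw [hq] at h3
      have hnum : F1 x * G x - F x * G1 x ≤ 0 := by
        by_contra hcon
        push_neg at hcon
        have := div_neg_of_pos_of_neg hcon h2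
        linarith
      exact div_nonpos_of_nonpos_of_nonneg hnum (sq_nonneg _)
end

section
/- Let f and g be continuous functions on (0,∞) with g(t) > 0 for all t > 0, let μ be a positive, differentiable, strictly increasing function mapping (0,∞) onto (μ(0⁺),∞), and suppose F(x) = ∫_0^∞ f(t)·e^{−x·μ(t)} dt and G(x) = ∫_0^∞ g(t)·e^{−x·μ(t)} dt converge for every x > 0. Suppose there exists t* ∈ (0,∞) such that f/g is strictly increasing on (0,t*) and strictly decreasing on (t*,∞), and suppose the limit L = lim_{x→0⁺} ( (F′(x)/G′(x))·G(x) − F(x) ) exists. Then F/G is decreasing on (0,∞) if and only if L ≥ 0. -/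
open Real Filter Set MeasureTheory Topology


private lemma aux_cont {f μ : ℝ → ℝ} (hf : ContinuousOn f (Ioi 0))
    (hμc : ContinuousOn μ (Ioi 0)) (k : ℕ) (x : ℝ) :
    ContinuousOn (fun t => f t * μ t ^ k * Real.exp (-x * μ t)) (Ioi 0) :=
  (hf.mul (hμc.pow k)).mul ((continuousOn_const.mul hμc).rexp)

private lemma aux_bound {c u : ℝ} (hc : 0 < c) (hu : 0 ≤ u) (k : ℕ) :
    u ^ k * Real.exp (-c * u) ≤ k.factorial / c ^ k := by
  have h := Real.pow_div_factorial_le_exp (x := c * u) (by positivity) k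
  have hek : (0:ℝ) < Real.exp (c * u) := Real.exp_pos _
  have hck : (0:ℝ) < c ^ k := by positivity
  have hkf : (0:ℝ) < k.factorial := by exact_mod_cast Nat.factorial_pos k
  rw [mul_pow] at h
  have h2 : u ^ k ≤ k.factorial / c ^ k * Real.exp (c * u) := by
    rw [div_le_iff₀ hkf] at h
    rw [div_mul_eq_mul_div, le_div_iff₀ hck]
    nlinarith
  have : Real.exp (-c * u) = (Real.exp (c * u))⁻¹ := by
    rw [neg_mul, Real.exp_neg]
  rw [this]
  rw [mul_inv_le_iff₀' hek] -- maybe name differs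
  calc u ^ k ≤ k.factorial / c ^ k * Real.exp (c * u) := h2
    _ = Real.exp (c * u) * (k.factorial / c ^ k) := by ring

private lemma aux_int' {f μ : ℝ → ℝ} (hf : ContinuousOn f (Ioi 0))
    (hμc : ContinuousOn μ (Ioi 0)) (hμpos : ∀ t ∈ Ioi (0:ℝ), 0 < μ t)
    (hfint : ∀ x > (0:ℝ), IntegrableOn (fun t => f t * Real.exp (-x * μ t)) (Ioi 0))
    (k : ℕ) {x : ℝ} (hx : 0 < x) :
    IntegrableOn (fun t => f t * μ t ^ k * Real.exp (-x * μ t)) (Ioi 0) := by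
  have hx2 : (0:ℝ) < x / 2 := half_pos hx
  set C : ℝ := k.factorial / (x/2) ^ k with hC
  have hC0 : 0 ≤ C := by positivity
  apply Integrable.mono ((hfint (x/2) hx2).const_mul C)
    ((aux_cont hf hμc k x).aestronglyMeasurable measurableSet_Ioi)
  rw [ae_restrict_iff' measurableSet_Ioi]
  refine ae_of_all _ fun t ht => ?_
  have hμt : 0 < μ t := hμpos t ht
  have key : μ t ^ k * Real.exp (-(x/2) * μ t) ≤ C := aux_bound hx2 hμt.le k
  have hsplit : Real.exp (-x * μ t) = Real.exp (-(x/2) * μ t) * Real.exp (-(x/2) * μ t) := by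
    rw [← Real.exp_add]; ring_nf
  rw [Real.norm_eq_abs, Real.norm_eq_abs, abs_mul, abs_mul, abs_mul, abs_mul]
  rw [abs_of_nonneg (Real.exp_pos _).le, abs_of_nonneg (Real.exp_pos _).le,
    abs_of_nonneg hC0, abs_of_nonneg (pow_nonneg hμt.le k)]
  rw [hsplit]
  calc |f t| * μ t ^ k * (Real.exp (-(x/2) * μ t) * Real.exp (-(x/2) * μ t))
      = (μ t ^ k * Real.exp (-(x/2) * μ t)) * (|f t| * Real.exp (-(x/2) * μ t)) := by ring
    _ ≤ C * (|f t| * Real.exp (-(x/2) * μ t)) := by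
        apply mul_le_mul_of_nonneg_right key (by positivity)


private lemma aux_deriv_core {ψ μ : ℝ → ℝ} (hψ : ContinuousOn ψ (Ioi 0))
    (hμc : ContinuousOn μ (Ioi 0)) (hμpos : ∀ t ∈ Ioi (0:ℝ), 0 < μ t)
    (hψint : ∀ x > (0:ℝ), IntegrableOn (fun t => ψ t * Real.exp (-x * μ t)) (Ioi 0))
    (hψμint : ∀ x > (0:ℝ), IntegrableOn (fun t => ψ t * μ t * Real.exp (-x * μ t)) (Ioi 0))
    {x₀ : ℝ} (hx : 0 < x₀) :
    HasDerivAt (fun x => ∫ t in Ioi (0:ℝ), ψ t * Real.exp (-x * μ t))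
      (-∫ t in Ioi (0:ℝ), ψ t * μ t * Real.exp (-x₀ * μ t)) x₀ := by
  have hε : (0:ℝ) < x₀ / 2 := half_pos hx
  have hmeas : ∀ x : ℝ, AEStronglyMeasurable (fun t => ψ t * Real.exp (-x * μ t))
      (volume.restrict (Ioi (0:ℝ))) := fun x =>
    ((hψ.mul ((continuousOn_const.mul hμc).rexp)).aestronglyMeasurable measurableSet_Ioi)
  have hmeas' : AEStronglyMeasurable (fun t => -(ψ t * μ t * Real.exp (-x₀ * μ t)))
      (volume.restrict (Ioi (0:ℝ))) :=
    (((hψ.mul hμc).mul ((continuousOn_const.mul hμc).rexp)).aestronglyMeasurable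
      measurableSet_Ioi).neg
  have key := hasDerivAt_integral_of_dominated_loc_of_deriv_le
    (μ := volume.restrict (Ioi (0:ℝ)))
    (F := fun x t => ψ t * Real.exp (-x * μ t))
    (F' := fun x t => -(ψ t * μ t * Real.exp (-x * μ t)))
    (bound := fun t => |ψ t * μ t * Real.exp (-(x₀/2) * μ t)|)
    (Metric.ball_mem_nhds x₀ hε) (Eventually.of_forall hmeas) (hψint x₀ hx) hmeas' ?_ ((hψμint (x₀/2) hε).abs) ?_
  · have := key.2
    rw [integral_neg] at this
    exact this
  · rw [ae_restrict_iff' measurableSet_Ioi]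
    refine ae_of_all _ fun t ht x hxb => ?_
    have hμt : 0 < μ t := hμpos t ht
    simp only [Real.norm_eq_abs, abs_neg, abs_mul,
      abs_of_nonneg (Real.exp_pos _).le]
    have hxg : x₀/2 ≤ x := by
      rw [Metric.mem_ball, Real.dist_eq, abs_lt] at hxb; linarith
    have : Real.exp (-x * μ t) ≤ Real.exp (-(x₀/2) * μ t) := by
      apply Real.exp_le_exp.2; nlinarith
    have h0 : 0 ≤ |ψ t| * |μ t| := by positivity
    exact mul_le_mul_of_nonneg_left this h0
  · rw [ae_restrict_iff' measurableSet_Ioi]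
    refine ae_of_all _ fun t ht x hxb => ?_
    have : HasDerivAt (fun x : ℝ => ψ t * Real.exp (-x * μ t))
        (ψ t * (Real.exp (-x * μ t) * -μ t)) x := by
      have h1 : HasDerivAt (fun x : ℝ => -x * μ t) (-μ t) x := by
        simpa using ((hasDerivAt_id x).neg.mul_const (μ t))
      exact ((h1.exp).const_mul (ψ t))
    exact this.congr_deriv (by ring)


-- positivity of integral
private lemma aux_pos {ψ μ : ℝ → ℝ} (hψ : ContinuousOn ψ (Ioi 0))
    (hψpos : ∀ t ∈ Ioi (0:ℝ), 0 < ψ t) (hμc : ContinuousOn μ (Ioi 0))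
    {x : ℝ} (hint : IntegrableOn (fun t => ψ t * Real.exp (-x * μ t)) (Ioi 0)) :
    0 < ∫ t in Ioi (0:ℝ), ψ t * Real.exp (-x * μ t) := by
  have hnn : 0 ≤ᵐ[volume.restrict (Ioi (0:ℝ))] fun t => ψ t * Real.exp (-x * μ t) := by
    apply (ae_restrict_iff' measurableSet_Ioi).2
    exact ae_of_all _ fun t ht => mul_nonneg (hψpos t ht).le (Real.exp_pos _).le
  rw [setIntegral_pos_iff_support_of_nonneg_ae hnn hint]
  have hsub : Ioi (0:ℝ) ⊆ Function.support (fun t => ψ t * Real.exp (-x * μ t)) ∩ Ioi 0 := by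
    intro t ht
    exact ⟨by simp [Function.mem_support, (hψpos t ht).ne', (Real.exp_pos (-x * μ t)).ne'], ht⟩
  calc (0:ENNReal) < volume (Ioi (0:ℝ)) := by simp [Real.volume_Ioi]
    _ ≤ _ := measure_mono hsub

private lemma aux_nonneg {ψ μ : ℝ → ℝ} (hψnn : ∀ t ∈ Ioi (0:ℝ), 0 ≤ ψ t) (x : ℝ) :
    0 ≤ ∫ t in Ioi (0:ℝ), ψ t * Real.exp (-x * μ t) :=
  setIntegral_nonneg measurableSet_Ioi fun t ht =>
    mul_nonneg (hψnn t ht) (Real.exp_pos _).le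

private lemma aux_nonpos {ψ μ : ℝ → ℝ} (hψnp : ∀ t ∈ Ioi (0:ℝ), ψ t ≤ 0) (x : ℝ) :
    (∫ t in Ioi (0:ℝ), ψ t * Real.exp (-x * μ t)) ≤ 0 :=
  setIntegral_nonpos measurableSet_Ioi fun t ht =>
    mul_nonpos_of_nonpos_of_nonneg (hψnp t ht) (Real.exp_pos _).le

-- tendsto 0 at infinity
private lemma aux_tendsto_zero {ψ μ : ℝ → ℝ} (hψ : ContinuousOn ψ (Ioi 0))
    (hμc : ContinuousOn μ (Ioi 0)) (hμpos : ∀ t ∈ Ioi (0:ℝ), 0 < μ t)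
    (hψint : ∀ x > (0:ℝ), IntegrableOn (fun t => ψ t * Real.exp (-x * μ t)) (Ioi 0)) :
    Tendsto (fun x => ∫ t in Ioi (0:ℝ), ψ t * Real.exp (-x * μ t)) atTop (𝓝 0) := by
  have key : Tendsto (fun x => ∫ t in Ioi (0:ℝ), ψ t * Real.exp (-x * μ t)) atTop
      (𝓝 (∫ t in Ioi (0:ℝ), (0:ℝ))) := by
    apply tendsto_integral_filter_of_dominated_convergence
      (bound := fun t => |ψ t| * Real.exp (-1 * μ t))
    · refine eventually_atTop.2 ⟨1, fun x _ => ?_⟩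
      exact (hψ.mul ((continuousOn_const.mul hμc).rexp)).aestronglyMeasurable measurableSet_Ioi
    · refine eventually_atTop.2 ⟨1, fun x hx => ?_⟩
      rw [ae_restrict_iff' measurableSet_Ioi]
      refine ae_of_all _ fun t ht => ?_
      have hμt : 0 < μ t := hμpos t ht
      rw [Real.norm_eq_abs, abs_mul, abs_of_nonneg (Real.exp_pos _).le]
      have : Real.exp (-x * μ t) ≤ Real.exp (-1 * μ t) := by
        apply Real.exp_le_exp.2; nlinarith
      exact mul_le_mul_of_nonneg_left this (abs_nonneg _)
    · have habs := (hψint 1 one_pos).abs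
      apply habs.congr
      refine ae_of_all _ fun t => ?_
      simp only [abs_mul, abs_of_nonneg (Real.exp_pos _).le]
    · rw [ae_restrict_iff' measurableSet_Ioi]
      refine ae_of_all _ fun t ht => ?_
      have hμt : 0 < μ t := hμpos t ht
      have : Tendsto (fun x : ℝ => -x * μ t) atTop atBot := by
        apply Tendsto.atBot_mul_const hμt
        exact tendsto_neg_atBot_iff.2 tendsto_id
      simpa using ((Real.tendsto_exp_atBot.comp this).const_mul (ψ t))
  simpa using key

-- antitone from HasDerivAt nonpos, on Ioi 0
private lemma aux_antitone {V V' : ℝ → ℝ} (hV : ∀ x ∈ Ioi (0:ℝ), HasDerivAt V (V' x) x)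
    (hV' : ∀ x ∈ Ioi (0:ℝ), V' x ≤ 0) : AntitoneOn V (Ioi 0) := by
  have hint : interior (Ioi (0:ℝ)) = Ioi 0 := isOpen_Ioi.interior_eq
  apply antitoneOn_of_deriv_nonpos (convex_Ioi 0)
  · exact fun x hx => ((hV x hx).continuousAt).continuousWithinAt
  · rw [hint]; exact fun x hx => ((hV x hx).differentiableAt).differentiableWithinAt
  · rw [hint]; intro x hx; rw [(hV x hx).deriv]; exact hV' x hx




-- derivative of the k-th moment integral
private lemma aux_DI {φ μ : ℝ → ℝ} (hφ : ContinuousOn φ (Ioi 0))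
    (hμc : ContinuousOn μ (Ioi 0)) (hμpos : ∀ t ∈ Ioi (0:ℝ), 0 < μ t)
    (hφint : ∀ x > (0:ℝ), IntegrableOn (fun t => φ t * Real.exp (-x * μ t)) (Ioi 0))
    (k : ℕ) {x₀ : ℝ} (hx : 0 < x₀) :
    HasDerivAt (fun x => ∫ t in Ioi (0:ℝ), φ t * μ t ^ k * Real.exp (-x * μ t))
      (-∫ t in Ioi (0:ℝ), φ t * μ t ^ (k+1) * Real.exp (-x₀ * μ t)) x₀ := by
  have h1 : ∀ x > (0:ℝ), IntegrableOn (fun t => (φ t * μ t ^ k) * Real.exp (-x * μ t)) (Ioi 0) :=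
    fun x hx => aux_int' hφ hμc hμpos hφint k hx
  have h2 : ∀ x > (0:ℝ),
      IntegrableOn (fun t => (φ t * μ t ^ k) * μ t * Real.exp (-x * μ t)) (Ioi 0) := by
    intro x hx
    have := aux_int' hφ hμc hμpos hφint (k+1) hx
    apply this.congr_fun ?_ measurableSet_Ioi
    intro t _; simp only [pow_succ]; ring
  have key := aux_deriv_core (hφ.mul (hμc.pow k)) hμc hμpos h1 h2 hx
  have e1 : (∫ t in Ioi (0:ℝ), (φ t * μ t ^ k) * μ t * Real.exp (-x₀ * μ t))
      = ∫ t in Ioi (0:ℝ), φ t * μ t ^ (k+1) * Real.exp (-x₀ * μ t) := by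
    apply setIntegral_congr_fun measurableSet_Ioi
    intro t _; simp only [pow_succ]; ring
  simp only [Pi.mul_apply, Pi.pow_apply] at key
  rw [e1] at key
  exact key

-- combination: ∫ φ μ^k (c - μ) e = c * ∫ φ μ^k e - ∫ φ μ^(k+1) e
private lemma aux_comb {φ μ : ℝ → ℝ} (hφ : ContinuousOn φ (Ioi 0))
    (hμc : ContinuousOn μ (Ioi 0)) (hμpos : ∀ t ∈ Ioi (0:ℝ), 0 < μ t)
    (hφint : ∀ x > (0:ℝ), IntegrableOn (fun t => φ t * Real.exp (-x * μ t)) (Ioi 0))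
    (k : ℕ) (c : ℝ) {x : ℝ} (hx : 0 < x) :
    (∫ t in Ioi (0:ℝ), φ t * μ t ^ k * (c - μ t) * Real.exp (-x * μ t))
      = c * (∫ t in Ioi (0:ℝ), φ t * μ t ^ k * Real.exp (-x * μ t))
        - ∫ t in Ioi (0:ℝ), φ t * μ t ^ (k+1) * Real.exp (-x * μ t) := by
  have h1 := aux_int' hφ hμc hμpos hφint k hx
  have h2 := aux_int' hφ hμc hμpos hφint (k+1) hx
  rw [← integral_const_mul, ← integral_sub (h1.const_mul c) h2]
  apply setIntegral_congr_fun measurableSet_Ioi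
  intro t _
  simp only [pow_succ]
  ring

-- maximum of the unimodal ratio at tstar
private lemma aux_rhomax {f g : ℝ → ℝ} (hf : ContinuousOn f (Ioi 0))
    (hg : ContinuousOn g (Ioi 0)) (hgpos : ∀ t ∈ Ioi (0:ℝ), 0 < g t)
    {tstar : ℝ} (htstar : tstar ∈ Ioi (0:ℝ))
    (hinc : StrictMonoOn (fun t => f t / g t) (Ioo 0 tstar))
    (hdec : StrictAntiOn (fun t => f t / g t) (Ioi tstar)) :
    ∀ t ∈ Ioi (0:ℝ), f t / g t ≤ f tstar / g tstar := by
  have hρc : ContinuousOn (fun t => f t / g t) (Ioi 0) :=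
    hf.div hg fun t ht => (hgpos t ht).ne'
  intro t ht
  rcases lt_trichotomy t tstar with hlt | heq | hgt
  · -- approach tstar from the left within Ioo t tstar
    have hne : (𝓝[Ioo t tstar] tstar).NeBot := by
      apply mem_closure_iff_nhdsWithin_neBot.1
      rw [closure_Ioo (ne_of_lt hlt)]
      exact ⟨le_of_lt hlt, le_refl tstar⟩
    have htend : Tendsto (fun s => f s / g s) (𝓝[Ioo t tstar] tstar) (𝓝 (f tstar / g tstar)) := by
      apply (hρc.continuousWithinAt htstar).mono
      intro s hs
      exact lt_trans ht.out hs.1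
    apply ge_of_tendsto htend
    refine eventually_nhdsWithin_of_forall fun s hs => ?_
    exact (hinc ⟨ht.out, hlt⟩ ⟨lt_trans ht.out hs.1, hs.2⟩ hs.1).le
  · rw [heq]
  · -- approach tstar from the right within Ioo tstar t
    have hne : (𝓝[Ioo tstar t] tstar).NeBot := by
      apply mem_closure_iff_nhdsWithin_neBot.1
      rw [closure_Ioo (ne_of_lt hgt)]
      exact ⟨le_refl tstar, le_of_lt hgt⟩
    have htend : Tendsto (fun s => f s / g s) (𝓝[Ioo tstar t] tstar) (𝓝 (f tstar / g tstar)) := by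
      apply (hρc.continuousWithinAt htstar).mono
      intro s hs
      exact lt_trans htstar.out hs.1
    apply ge_of_tendsto htend
    refine eventually_nhdsWithin_of_forall fun s hs => ?_
    exact (hdec hs.1 (hgt : tstar < t) hs.2).le


private lemma aux_comb2 {φ μ : ℝ → ℝ} (hφ : ContinuousOn φ (Ioi 0))
    (hμc : ContinuousOn μ (Ioi 0)) (hμpos : ∀ t ∈ Ioi (0:ℝ), 0 < μ t)
    (hφint : ∀ x > (0:ℝ), IntegrableOn (fun t => φ t * Real.exp (-x * μ t)) (Ioi 0))
    (c1 c2 : ℝ) {x : ℝ} (hx : 0 < x) :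
    (∫ t in Ioi (0:ℝ), φ t * μ t ^ 1 * (c1 - μ t) * (c2 - μ t) * Real.exp (-x * μ t))
      = c1 * c2 * (∫ t in Ioi (0:ℝ), φ t * μ t ^ 1 * Real.exp (-x * μ t))
        - (c1 + c2) * (∫ t in Ioi (0:ℝ), φ t * μ t ^ 2 * Real.exp (-x * μ t))
        + ∫ t in Ioi (0:ℝ), φ t * μ t ^ 3 * Real.exp (-x * μ t) := by
  have h1 := aux_int' hφ hμc hμpos hφint 1 hx
  have h2 := aux_int' hφ hμc hμpos hφint 2 hx
  have h3 := aux_int' hφ hμc hμpos hφint 3 hx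
  have hA : IntegrableOn (fun t => c1 * c2 * (φ t * μ t ^ 1 * Real.exp (-x * μ t))) (Ioi 0) :=
    h1.const_mul (c1*c2)
  have hBC : IntegrableOn (fun t => (c1 + c2) * (φ t * μ t ^ 2 * Real.exp (-x * μ t))
      - φ t * μ t ^ 3 * Real.exp (-x * μ t)) (Ioi 0) := (h2.const_mul (c1+c2)).sub h3
  have hB : IntegrableOn (fun t => (c1 + c2) * (φ t * μ t ^ 2 * Real.exp (-x * μ t))) (Ioi 0) :=
    h2.const_mul (c1+c2)
  calc (∫ t in Ioi (0:ℝ), φ t * μ t ^ 1 * (c1 - μ t) * (c2 - μ t) * Real.exp (-x * μ t))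
      = ∫ t in Ioi (0:ℝ), (c1 * c2 * (φ t * μ t ^ 1 * Real.exp (-x * μ t))
          - ((c1 + c2) * (φ t * μ t ^ 2 * Real.exp (-x * μ t))
            - φ t * μ t ^ 3 * Real.exp (-x * μ t))) := by
        apply setIntegral_congr_fun measurableSet_Ioi
        intro t _; ring
    _ = (∫ t in Ioi (0:ℝ), c1 * c2 * (φ t * μ t ^ 1 * Real.exp (-x * μ t)))
          - ∫ t in Ioi (0:ℝ), ((c1 + c2) * (φ t * μ t ^ 2 * Real.exp (-x * μ t))
            - φ t * μ t ^ 3 * Real.exp (-x * μ t)) := integral_sub hA hBC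
    _ = (∫ t in Ioi (0:ℝ), c1 * c2 * (φ t * μ t ^ 1 * Real.exp (-x * μ t)))
          - ((∫ t in Ioi (0:ℝ), (c1 + c2) * (φ t * μ t ^ 2 * Real.exp (-x * μ t)))
            - ∫ t in Ioi (0:ℝ), φ t * μ t ^ 3 * Real.exp (-x * μ t)) := by
        rw [integral_sub hB h3]
    _ = c1 * c2 * (∫ t in Ioi (0:ℝ), φ t * μ t ^ 1 * Real.exp (-x * μ t))
        - (c1 + c2) * (∫ t in Ioi (0:ℝ), φ t * μ t ^ 2 * Real.exp (-x * μ t))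
        + ∫ t in Ioi (0:ℝ), φ t * μ t ^ 3 * Real.exp (-x * μ t) := by
        rw [integral_const_mul, integral_const_mul]; ring

private lemma aux_scaled {T : ℝ → ℝ} {d : ℝ} (c : ℝ) {x : ℝ} (hT : HasDerivAt T d x) :
    HasDerivAt (fun y => Real.exp (c*y) * T y) (Real.exp (c*x) * (c * T x + d)) x := by
  have he : HasDerivAt (fun y : ℝ => Real.exp (c*y)) (Real.exp (c*x) * (c * 1)) x :=
    ((hasDerivAt_id x).const_mul c).exp
  have := he.mul hT
  exact this.congr_deriv (by ring)

private lemma aux_vd2 {f g μ : ℝ → ℝ}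
    (hf : ContinuousOn f (Ioi 0)) (hg : ContinuousOn g (Ioi 0))
    (hgpos : ∀ t ∈ Ioi (0:ℝ), 0 < g t)
    (hμpos : ∀ t ∈ Ioi (0:ℝ), 0 < μ t)
    (hμc : ContinuousOn μ (Ioi 0))
    (hμmono : StrictMonoOn μ (Ioi 0))
    {μ0 : ℝ} (hμonto : μ '' Ioi 0 = Ioi μ0)
    (hfint : ∀ x > (0:ℝ), IntegrableOn (fun t => f t * Real.exp (-x * μ t)) (Ioi 0))
    (hgint : ∀ x > (0:ℝ), IntegrableOn (fun t => g t * Real.exp (-x * μ t)) (Ioi 0))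
    {tstar : ℝ} (htstar : tstar ∈ Ioi (0:ℝ))
    (hinc : StrictMonoOn (fun t => f t / g t) (Ioo 0 tstar))
    (hdec : StrictAntiOn (fun t => f t / g t) (Ioi tstar))
    (lam : ℝ) {x₁ x₂ x₃ : ℝ} (hx1 : 0 < x₁) (h12 : x₁ < x₂) (h23 : x₂ < x₃)
    (hT1 : 0 < ∫ t in Ioi (0:ℝ), (f t - lam * g t) * μ t ^ 1 * Real.exp (-x₁ * μ t))
    (hT2 : (∫ t in Ioi (0:ℝ), (f t - lam * g t) * μ t ^ 1 * Real.exp (-x₂ * μ t)) < 0)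
    (hT3 : 0 < ∫ t in Ioi (0:ℝ), (f t - lam * g t) * μ t ^ 1 * Real.exp (-x₃ * μ t)) :
    False := by
  have hx2 : 0 < x₂ := lt_trans hx1 h12
  have hx3 : 0 < x₃ := lt_trans hx2 h23
  set ρ : ℝ → ℝ := fun t => f t / g t with hρdef
  have hρc : ContinuousOn ρ (Ioi 0) := hf.div hg fun t ht => (hgpos t ht).ne'
  set h : ℝ → ℝ := fun t => f t - lam * g t with hhdef
  have hhc : ContinuousOn h (Ioi 0) := hf.sub (continuousOn_const.mul hg)
  have hμI : ∀ t ∈ Ioi (0:ℝ), μ0 < μ t := fun t ht =>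
    (hμonto ▸ mem_image_of_mem μ ht : μ t ∈ Ioi μ0)
  have hμmono' : ∀ {s t : ℝ}, s ∈ Ioi (0:ℝ) → t ∈ Ioi (0:ℝ) → s ≤ t → μ s ≤ μ t :=
    fun hs ht hst => hμmono.monotoneOn hs ht hst
  have hhint : ∀ x > (0:ℝ), IntegrableOn (fun t => h t * Real.exp (-x * μ t)) (Ioi 0) := by
    intro x hx
    have h0 : IntegrableOn
        (fun t => f t * Real.exp (-x * μ t) - lam * (g t * Real.exp (-x * μ t))) (Ioi 0) :=
      (hfint x hx).sub ((hgint x hx).const_mul lam)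
    apply h0.congr_fun ?_ measurableSet_Ioi
    intro t _; simp only [hhdef]; ring
  have hle : ∀ t ∈ Ioi (0:ℝ), ρ t ≤ lam → h t ≤ 0 := by
    intro t ht hρ
    have hgt := hgpos t ht
    have he : h t = g t * (ρ t - lam) := by
      simp only [hhdef, hρdef]; field_simp
    rw [he]
    exact mul_nonpos_iff.2 (Or.inl ⟨hgt.le, by linarith⟩)
  have hge : ∀ t ∈ Ioi (0:ℝ), lam ≤ ρ t → 0 ≤ h t := by
    intro t ht hρ
    have hgt := hgpos t ht
    have he : h t = g t * (ρ t - lam) := by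
      simp only [hhdef, hρdef]; field_simp
    rw [he]
    exact mul_nonneg hgt.le (by linarith)
  set T : ℝ → ℝ := fun x => ∫ t in Ioi (0:ℝ), h t * μ t ^ 1 * Real.exp (-x * μ t) with hTdef
  set D2 : ℝ → ℝ := fun x => ∫ t in Ioi (0:ℝ), h t * μ t ^ 2 * Real.exp (-x * μ t) with hD2def
  set D3 : ℝ → ℝ := fun x => ∫ t in Ioi (0:ℝ), h t * μ t ^ 3 * Real.exp (-x * μ t) with hD3def
  have hT1' : 0 < T x₁ := hT1
  have hT2' : T x₂ < 0 := hT2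
  have hT3' : 0 < T x₃ := hT3
  have hT' : ∀ x ∈ Ioi (0:ℝ), HasDerivAt T (-D2 x) x := fun x hx =>
    aux_DI hhc hμc hμpos hhint 1 hx
  have hD2' : ∀ x ∈ Ioi (0:ℝ), HasDerivAt D2 (-D3 x) x := fun x hx => by
    have := aux_DI hhc hμc hμpos hhint 2 hx
    exact this
  have hρmax : ∀ t ∈ Ioi (0:ℝ), ρ t ≤ ρ tstar := aux_rhomax hf hg hgpos htstar hinc hdec
  by_cases hup : ∃ t ∈ Ioi (0:ℝ), lam < ρ t
  swap
  · push_neg at hup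
    have hnp : T x₁ ≤ 0 := by
      apply aux_nonpos (μ := μ)
      intro t ht
      have h1 : h t ≤ 0 := hle t ht (hup t ht)
      have h2 : (0:ℝ) ≤ μ t ^ 1 := by
        have := hμpos t ht; positivity
      exact mul_nonpos_iff.2 (Or.inr ⟨h1, h2⟩)
    exact absurd hT1' (not_lt.2 hnp)
  obtain ⟨t₀, ht₀, hlam₀⟩ := hup
  have hlamstar : lam < ρ tstar := lt_of_lt_of_le hlam₀ (hρmax t₀ ht₀)
  set A : Set ℝ := {t | t ∈ Ioc (0:ℝ) tstar ∧ lam < ρ t} with hAdef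
  have hAmem : tstar ∈ A := ⟨⟨htstar.out, le_refl _⟩, hlamstar⟩
  have hAne : A.Nonempty := ⟨tstar, hAmem⟩
  have hAbdd : BddBelow A := ⟨0, fun t ht' => ht'.1.1.le⟩
  set a : ℝ := sInf A with hadef
  have ha0 : 0 ≤ a := le_csInf hAne fun t ht' => ht'.1.1.le
  have hatstar : a ≤ tstar := csInf_le hAbdd hAmem
  have FA1 : ∀ t, 0 < t → t < a → ρ t ≤ lam := by
    intro t ht hta
    by_contra hc
    push_neg at hc
    have : t ∈ A := ⟨⟨ht, le_trans hta.le hatstar⟩, hc⟩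
    exact absurd (csInf_le hAbdd this) (not_le.2 hta)
  have FA2 : ∀ t, a < t → t ≤ tstar → lam < ρ t := by
    intro t hat htt
    rcases eq_or_lt_of_le htt with heq | hlt
    · rw [heq]; exact hlamstar
    · obtain ⟨s, hsA, hst⟩ := exists_lt_of_csInf_lt hAne hat
      have hs0 : 0 < s := hsA.1.1
      exact lt_trans hsA.2 (hinc ⟨hs0, lt_trans hst hlt⟩ ⟨lt_trans hs0 hst, hlt⟩ hst)
  have FA3 : 0 < a → ρ a ≤ lam := by
    intro ha
    by_contra hc
    push_neg at hc
    have hcw : ContinuousWithinAt ρ (Ioo 0 a) a :=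
      (hρc.continuousWithinAt ha).mono fun s hs => hs.1
    have hne : (𝓝[Ioo (0:ℝ) a] a).NeBot := by
      apply mem_closure_iff_nhdsWithin_neBot.1
      rw [closure_Ioo ha.ne]
      exact ⟨ha.le, le_refl _⟩
    have hev : ∀ᶠ s in 𝓝[Ioo (0:ℝ) a] a, lam < ρ s := hcw.eventually (eventually_gt_nhds hc)
    obtain ⟨s, hρs, hsIoo⟩ := (hev.and eventually_mem_nhdsWithin).exists
    have : s ∈ A := ⟨⟨hsIoo.1, le_trans hsIoo.2.le hatstar⟩, hρs⟩
    exact absurd (csInf_le hAbdd this) (not_le.2 hsIoo.2)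
  set B : Set ℝ := {t | t ∈ Ici tstar ∧ lam < ρ t} with hBdef
  have hBmem : tstar ∈ B := ⟨self_mem_Ici, hlamstar⟩
  have hBne : B.Nonempty := ⟨tstar, hBmem⟩
  by_cases hBb : BddAbove B
  case neg =>
    have FBinf : ∀ t, tstar ≤ t → lam < ρ t := by
      intro t htt
      rcases eq_or_lt_of_le htt with heq | hlt
      · rw [← heq]; exact hlamstar
      · obtain ⟨s, hsB, hts⟩ := not_bddAbove_iff.1 hBb t
        exact lt_trans hsB.2 (hdec hlt (lt_trans hlt hts) hts)
    have hpos_right : ∀ t ∈ Ioi (0:ℝ), a < t → 0 ≤ h t := by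
      intro t ht hat
      rcases le_or_gt t tstar with hts | hts
      · exact hge t ht (FA2 t hat hts).le
      · exact hge t ht (FBinf t hts.le).le
    rcases eq_or_lt_of_le ha0 with ha | ha
    · have hnn : 0 ≤ T x₂ := by
        apply aux_nonneg (μ := μ)
        intro t ht
        have h1 : 0 ≤ h t := hpos_right t ht (by rw [← ha]; exact ht.out)
        have := hμpos t ht
        positivity
      exact absurd hT2' (not_lt.2 hnn)
    · have haI : a ∈ Ioi (0:ℝ) := ha
      have hP : ∀ t ∈ Ioi (0:ℝ), h t * μ t ^ 1 * (μ a - μ t) ≤ 0 := by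
        intro t ht
        have hμt := hμpos t ht
        rcases le_or_gt t a with hta | hta
        · have hht : h t ≤ 0 := by
            rcases eq_or_lt_of_le hta with heq | hlt
            · rw [heq]; exact hle a haI (FA3 ha)
            · exact hle t ht (FA1 t ht.out hlt)
          have hfac : 0 ≤ μ a - μ t := sub_nonneg.2 (hμmono' ht haI hta)
          have h1 : h t * μ t ^ 1 ≤ 0 := mul_nonpos_iff.2 (Or.inr ⟨hht, by positivity⟩)
          exact mul_nonpos_iff.2 (Or.inr ⟨h1, hfac⟩)
        · have hht : 0 ≤ h t := hpos_right t ht hta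
          have hfac : μ a - μ t ≤ 0 := sub_nonpos.2 (hμmono' haI ht hta.le)
          have h1 : 0 ≤ h t * μ t ^ 1 := mul_nonneg hht (by positivity)
          exact mul_nonpos_iff.2 (Or.inl ⟨h1, hfac⟩)
      have hVant : AntitoneOn (fun y => Real.exp (μ a * y) * T y) (Ioi 0) := by
        apply aux_antitone (V' := fun x => Real.exp (μ a * x) * (μ a * T x + (-D2 x)))
        · intro x hx; exact aux_scaled (μ a) (hT' x hx)
        · intro x hx
          have hcomb := aux_comb hhc hμc hμpos hhint 1 (μ a) hx.out
          have hnp : (∫ t in Ioi (0:ℝ),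
              h t * μ t ^ 1 * (μ a - μ t) * Real.exp (-x * μ t)) ≤ 0 :=
            aux_nonpos (fun t ht => hP t ht) x
          have hW : μ a * T x + (-D2 x) ≤ 0 := by
            rw [hcomb] at hnp
            have e1 : (∫ t in Ioi (0:ℝ), h t * μ t ^ 1 * Real.exp (-x * μ t)) = T x := rfl
            have e2 : (∫ t in Ioi (0:ℝ), h t * μ t ^ (1+1) * Real.exp (-x * μ t)) = D2 x := rfl
            rw [e1, e2] at hnp
            linarith
          have hep := Real.exp_pos (μ a * x)
          exact mul_nonpos_iff.2 (Or.inl ⟨hep.le, hW⟩)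
      have hcmp : Real.exp (μ a * x₃) * T x₃ ≤ Real.exp (μ a * x₂) * T x₂ :=
        hVant (mem_Ioi.2 hx2) (mem_Ioi.2 hx3) h23.le
      have hneg : Real.exp (μ a * x₂) * T x₂ < 0 :=
        mul_neg_of_pos_of_neg (Real.exp_pos _) hT2'
      have hpos : 0 < Real.exp (μ a * x₃) * T x₃ :=
        mul_pos (Real.exp_pos _) hT3'
      linarith
  case pos =>
    set b : ℝ := sSup B with hbdef
    have hbstar : tstar ≤ b := le_csSup hBb hBmem
    have hbI : b ∈ Ioi (0:ℝ) := lt_of_lt_of_le htstar.out hbstar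
    have FB1 : ∀ t, tstar ≤ t → t < b → lam < ρ t := by
      intro t htt htb
      rcases eq_or_lt_of_le htt with heq | hlt
      · rw [← heq]; exact hlamstar
      · obtain ⟨s, hsB, hts⟩ := exists_lt_of_lt_csSup hBne htb
        exact lt_trans hsB.2 (hdec hlt (lt_trans hlt hts) hts)
    have FB2 : ∀ t, b < t → ρ t ≤ lam := by
      intro t hbt
      by_contra hc
      push_neg at hc
      have : t ∈ B := ⟨le_trans hbstar hbt.le, hc⟩
      exact absurd (le_csSup hBb this) (not_le.2 hbt)
    have hk_pos : ∀ t ∈ Ioi (0:ℝ), a < t → 0 ≤ h t * μ t ^ 1 * (μ b - μ t) := by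
      intro t ht hat
      have hμt := hμpos t ht
      rcases lt_trichotomy t b with htb | heq | hbt
      · have hht : 0 ≤ h t := by
          rcases le_or_gt t tstar with h1 | h1
          · exact hge t ht (FA2 t hat h1).le
          · exact hge t ht (FB1 t h1.le htb).le
        have hfac : 0 ≤ μ b - μ t := sub_nonneg.2 (hμmono' ht hbI htb.le)
        exact mul_nonneg (mul_nonneg hht (by positivity)) hfac
      · rw [heq]; simp
      · have hht : h t ≤ 0 := hle t ht (FB2 t hbt)
        have hfac : μ b - μ t ≤ 0 := sub_nonpos.2 (hμmono' hbI ht hbt.le)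
        have h1 : h t * μ t ^ 1 ≤ 0 := mul_nonpos_iff.2 (Or.inr ⟨hht, by positivity⟩)
        exact mul_nonneg_iff.2 (Or.inr ⟨h1, hfac⟩)
    have hk_neg : ∀ t ∈ Ioi (0:ℝ), t ≤ a → h t * μ t ^ 1 * (μ b - μ t) ≤ 0 := by
      intro t ht hta
      have hμt := hμpos t ht
      have ha : 0 < a := lt_of_lt_of_le ht.out hta
      have haI : a ∈ Ioi (0:ℝ) := ha
      have hht : h t ≤ 0 := by
        rcases eq_or_lt_of_le hta with heq | hlt
        · rw [heq]; exact hle a haI (FA3 ha)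
        · exact hle t ht (FA1 t ht.out hlt)
      have hfac : 0 ≤ μ b - μ t :=
        sub_nonneg.2 (hμmono' ht hbI (le_trans hta (le_trans hatstar hbstar)))
      have h1 : h t * μ t ^ 1 ≤ 0 := mul_nonpos_iff.2 (Or.inr ⟨hht, by positivity⟩)
      exact mul_nonpos_iff.2 (Or.inr ⟨h1, hfac⟩)
    set ca : ℝ := if 0 < a then μ a else μ0 with hcadef
    have hca_le : ∀ t ∈ Ioi (0:ℝ), a ≤ t → ca ≤ μ t := by
      intro t ht hat
      rw [hcadef]
      split_ifs with h'
      · exact hμmono' (mem_Ioi.2 h') ht hat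
      · exact (hμI t ht).le
    have hca_ge : ∀ t ∈ Ioi (0:ℝ), t ≤ a → μ t ≤ ca := by
      intro t ht hta
      have ha : 0 < a := lt_of_lt_of_le ht.out hta
      rw [hcadef, if_pos ha]
      exact hμmono' ht (mem_Ioi.2 ha) hta
    have hP1 : ∀ t ∈ Ioi (0:ℝ), h t * μ t ^ 1 * (μ b - μ t) * (ca - μ t) ≤ 0 := by
      intro t ht
      rcases le_or_gt t a with hta | hta
      · exact mul_nonpos_iff.2
          (Or.inr ⟨hk_neg t ht hta, sub_nonneg.2 (hca_ge t ht hta)⟩)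
      · exact mul_nonpos_iff.2
          (Or.inl ⟨hk_pos t ht hta, sub_nonpos.2 (hca_le t ht hta.le)⟩)
    set W : ℝ → ℝ := fun x => μ b * T x - D2 x with hWdef
    have hW' : ∀ x ∈ Ioi (0:ℝ), HasDerivAt W (μ b * (-D2 x) - (-D3 x)) x := fun x hx =>
      ((hT' x hx).const_mul (μ b)).sub (hD2' x hx)
    have hV2ant : AntitoneOn (fun y => Real.exp (ca * y) * W y) (Ioi 0) := by
      apply aux_antitone
        (V' := fun x => Real.exp (ca * x) * (ca * W x + (μ b * (-D2 x) - (-D3 x))))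
      · intro x hx; exact aux_scaled ca (hW' x hx)
      · intro x hx
        have hcomb := aux_comb2 hhc hμc hμpos hhint (μ b) ca hx.out
        have hnp : (∫ t in Ioi (0:ℝ),
            h t * μ t ^ 1 * (μ b - μ t) * (ca - μ t) * Real.exp (-x * μ t)) ≤ 0 :=
          aux_nonpos (fun t ht => hP1 t ht) x
        have hWle : ca * W x + (μ b * (-D2 x) - (-D3 x)) ≤ 0 := by
          rw [hcomb] at hnp
          have e1 : (∫ t in Ioi (0:ℝ), h t * μ t ^ 1 * Real.exp (-x * μ t)) = T x := rfl
          have e2 : (∫ t in Ioi (0:ℝ), h t * μ t ^ 2 * Real.exp (-x * μ t)) = D2 x := rfl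
          have e3 : (∫ t in Ioi (0:ℝ), h t * μ t ^ 3 * Real.exp (-x * μ t)) = D3 x := rfl
          rw [e1, e2, e3] at hnp
          have eW : W x = μ b * T x - D2 x := rfl
          rw [eW]
          linarith
        have hep := Real.exp_pos (ca * x)
        exact mul_nonpos_iff.2 (Or.inl ⟨hep.le, hWle⟩)
    -- MVT on [x₂, x₃] for V := exp (μ b x) T x
    have hV' : ∀ x ∈ Ioi (0:ℝ), HasDerivAt (fun y => Real.exp (μ b * y) * T y)
        (Real.exp (μ b * x) * W x) x := by
      intro x hx
      have := aux_scaled (μ b) (hT' x hx)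
      convert this using 1
      simp only [hWdef]; ring
    have hVcont : ∀ s : Set ℝ, s ⊆ Ioi (0:ℝ) →
        ContinuousOn (fun y => Real.exp (μ b * y) * T y) s := by
      intro s hs x hx
      exact ((hV' x (hs hx)).continuousAt).continuousWithinAt
    obtain ⟨ξ, hξI, hξ⟩ := exists_hasDerivAt_eq_slope (fun y => Real.exp (μ b * y) * T y)
      (fun x => Real.exp (μ b * x) * W x) h23
      (hVcont _ (fun y hy => lt_of_lt_of_le hx2 hy.1))
      (fun x hx => hV' x (mem_Ioi.2 (lt_trans hx2 hx.1)))
    have hslope : 0 < (Real.exp (μ b * x₃) * T x₃ - Real.exp (μ b * x₂) * T x₂) / (x₃ - x₂) := by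
      apply div_pos
      · have hneg : Real.exp (μ b * x₂) * T x₂ < 0 :=
          mul_neg_of_pos_of_neg (Real.exp_pos _) hT2'
        have hpos : 0 < Real.exp (μ b * x₃) * T x₃ := mul_pos (Real.exp_pos _) hT3'
        linarith
      · linarith
    have hWξ : 0 < W ξ := by
      have h1 : 0 < Real.exp (μ b * ξ) * W ξ := by rw [hξ]; exact hslope
      nlinarith [Real.exp_pos (μ b * ξ)]
    have hξ0 : 0 < ξ := lt_trans hx2 hξI.1
    have hWpos : ∀ y, 0 < y → y ≤ ξ → 0 < W y := by
      intro y hy hyξ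
      have hmono : Real.exp (ca * ξ) * W ξ ≤ Real.exp (ca * y) * W y :=
        hV2ant (mem_Ioi.2 hy) (mem_Ioi.2 hξ0) hyξ
      have h2 : 0 < Real.exp (ca * ξ) * W ξ := mul_pos (Real.exp_pos _) hWξ
      nlinarith [Real.exp_pos (ca * y)]
    obtain ⟨η, hηI, hη⟩ := exists_hasDerivAt_eq_slope (fun y => Real.exp (μ b * y) * T y)
      (fun x => Real.exp (μ b * x) * W x) h12
      (hVcont _ (fun y hy => lt_of_lt_of_le hx1 hy.1))
      (fun x hx => hV' x (mem_Ioi.2 (lt_trans hx1 hx.1)))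
    have hWη : 0 < W η :=
      hWpos η (lt_trans hx1 hηI.1) (le_trans hηI.2.le hξI.1.le)
    have hpos2 : 0 < Real.exp (μ b * η) * W η * (x₂ - x₁) :=
      mul_pos (mul_pos (Real.exp_pos _) hWη) (sub_pos.2 h12)
    rw [hη] at hpos2
    rw [div_mul_cancel₀ _ (sub_pos.2 h12).ne'] at hpos2
    have hVx1 : 0 < Real.exp (μ b * x₁) * T x₁ := mul_pos (Real.exp_pos _) hT1'
    have hVx2 : Real.exp (μ b * x₂) * T x₂ < 0 :=
      mul_neg_of_pos_of_neg (Real.exp_pos _) hT2'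
    linarith


-- quasi-concavity of r = F1/G1
private lemma aux_qc {f g μ : ℝ → ℝ}
    (hf : ContinuousOn f (Ioi 0)) (hg : ContinuousOn g (Ioi 0))
    (hgpos : ∀ t ∈ Ioi (0:ℝ), 0 < g t)
    (hμpos : ∀ t ∈ Ioi (0:ℝ), 0 < μ t)
    (hμc : ContinuousOn μ (Ioi 0))
    (hμmono : StrictMonoOn μ (Ioi 0))
    {μ0 : ℝ} (hμonto : μ '' Ioi 0 = Ioi μ0)
    (hfint : ∀ x > (0:ℝ), IntegrableOn (fun t => f t * Real.exp (-x * μ t)) (Ioi 0))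
    (hgint : ∀ x > (0:ℝ), IntegrableOn (fun t => g t * Real.exp (-x * μ t)) (Ioi 0))
    {tstar : ℝ} (htstar : tstar ∈ Ioi (0:ℝ))
    (hinc : StrictMonoOn (fun t => f t / g t) (Ioo 0 tstar))
    (hdec : StrictAntiOn (fun t => f t / g t) (Ioi tstar))
    {x₁ x₂ x₃ : ℝ} (hx1 : 0 < x₁) (h12 : x₁ < x₂) (h23 : x₂ < x₃) :
    min ((∫ t in Ioi (0:ℝ), f t * μ t ^ 1 * Real.exp (-x₁ * μ t))
          / (∫ t in Ioi (0:ℝ), g t * μ t ^ 1 * Real.exp (-x₁ * μ t)))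
        ((∫ t in Ioi (0:ℝ), f t * μ t ^ 1 * Real.exp (-x₃ * μ t))
          / (∫ t in Ioi (0:ℝ), g t * μ t ^ 1 * Real.exp (-x₃ * μ t)))
      ≤ (∫ t in Ioi (0:ℝ), f t * μ t ^ 1 * Real.exp (-x₂ * μ t))
          / (∫ t in Ioi (0:ℝ), g t * μ t ^ 1 * Real.exp (-x₂ * μ t)) := by
  set F1 : ℝ → ℝ := fun x => ∫ t in Ioi (0:ℝ), f t * μ t ^ 1 * Real.exp (-x * μ t) with hF1
  set G1 : ℝ → ℝ := fun x => ∫ t in Ioi (0:ℝ), g t * μ t ^ 1 * Real.exp (-x * μ t) with hG1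
  set r : ℝ → ℝ := fun x => F1 x / G1 x with hr
  have hG1pos : ∀ x : ℝ, 0 < x → 0 < G1 x := by
    intro x hx
    apply aux_pos (hg.mul (hμc.pow 1)) ?_ hμc (aux_int' hg hμc hμpos hgint 1 hx)
    intro t ht
    have h1 := hgpos t ht
    have h2 := hμpos t ht
    show 0 < g t * μ t ^ 1
    positivity
  by_contra hcon
  push_neg at hcon
  set lam : ℝ := (r x₂ + min (r x₁) (r x₃)) / 2 with hlam
  have hl1 : r x₂ < lam := by
    rw [hlam]; linarith [hcon]
  have hl2 : lam < min (r x₁) (r x₃) := by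
    rw [hlam]; linarith [hcon]
  -- T lam x = F1 x - lam * G1 x
  have hlin : ∀ x : ℝ, 0 < x →
      (∫ t in Ioi (0:ℝ), (f t - lam * g t) * μ t ^ 1 * Real.exp (-x * μ t))
        = F1 x - lam * G1 x := by
    intro x hx
    have h1 := aux_int' hf hμc hμpos hfint 1 hx
    have h2 := aux_int' hg hμc hμpos hgint 1 hx
    calc (∫ t in Ioi (0:ℝ), (f t - lam * g t) * μ t ^ 1 * Real.exp (-x * μ t))
        = ∫ t in Ioi (0:ℝ), (f t * μ t ^ 1 * Real.exp (-x * μ t)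
            - lam * (g t * μ t ^ 1 * Real.exp (-x * μ t))) := by
          apply setIntegral_congr_fun measurableSet_Ioi
          intro t _; ring
      _ = (∫ t in Ioi (0:ℝ), f t * μ t ^ 1 * Real.exp (-x * μ t))
            - ∫ t in Ioi (0:ℝ), lam * (g t * μ t ^ 1 * Real.exp (-x * μ t)) :=
          integral_sub h1 (h2.const_mul lam)
      _ = F1 x - lam * G1 x := by rw [integral_const_mul]
  have hsign : ∀ x : ℝ, 0 < x → F1 x - lam * G1 x = G1 x * (r x - lam) := by
    intro x hx
    rw [hr]
    field_simp [(hG1pos x hx).ne']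
  apply aux_vd2 hf hg hgpos hμpos hμc hμmono hμonto hfint hgint htstar hinc hdec lam
    hx1 h12 h23
  · rw [hlin x₁ hx1, hsign x₁ hx1]
    have : 0 < r x₁ - lam := by
      have := lt_of_lt_of_le hl2 (min_le_left _ _); linarith
    exact mul_pos (hG1pos x₁ hx1) this
  · rw [hlin x₂ (lt_trans hx1 h12), hsign x₂ (lt_trans hx1 h12)]
    have : r x₂ - lam < 0 := by linarith
    exact mul_neg_of_pos_of_neg (hG1pos x₂ (lt_trans hx1 h12)) this
  · rw [hlin x₃ (lt_trans (lt_trans hx1 h12) h23), hsign x₃ (lt_trans (lt_trans hx1 h12) h23)]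
    have : 0 < r x₃ - lam := by
      have := lt_of_lt_of_le hl2 (min_le_right _ _); linarith
    exact mul_pos (hG1pos x₃ (lt_trans (lt_trans hx1 h12) h23)) this


set_option maxHeartbeats 1000000 in
theorem stmt_7 (f g μ : ℝ → ℝ)
    (hf : ContinuousOn f (Ioi 0)) (hg : ContinuousOn g (Ioi 0))
    (hgpos : ∀ t ∈ Ioi (0 : ℝ), 0 < g t)
    (hμpos : ∀ t ∈ Ioi (0 : ℝ), 0 < μ t)
    (hμdiff : DifferentiableOn ℝ μ (Ioi 0))
    (hμmono : StrictMonoOn μ (Ioi 0))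
    (μ0 : ℝ) (hμ0 : Tendsto μ (𝓝[>] (0 : ℝ)) (𝓝 μ0))
    (hμonto : μ '' Ioi 0 = Ioi μ0)
    (hfint : ∀ x > (0 : ℝ), IntegrableOn (fun t => f t * Real.exp (-x * μ t)) (Ioi 0))
    (hgint : ∀ x > (0 : ℝ), IntegrableOn (fun t => g t * Real.exp (-x * μ t)) (Ioi 0))
    (F G : ℝ → ℝ)
    (hF : ∀ x, F x = ∫ t in Ioi (0 : ℝ), f t * Real.exp (-x * μ t))
    (hG : ∀ x, G x = ∫ t in Ioi (0 : ℝ), g t * Real.exp (-x * μ t))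
    (tstar : ℝ) (htstar : tstar ∈ Ioi (0 : ℝ))
    (hinc : StrictMonoOn (fun t => f t / g t) (Ioo 0 tstar))
    (hdec : StrictAntiOn (fun t => f t / g t) (Ioi tstar))
    (L : ℝ)
    (hL : Tendsto (fun x => deriv F x / deriv G x * G x - F x)
      (𝓝[>] (0 : ℝ)) (𝓝 L)) :
    AntitoneOn (fun x => F x / G x) (Ioi 0) ↔ 0 ≤ L := by
  have hμc : ContinuousOn μ (Ioi 0) := hμdiff.continuousOn
  set F1 : ℝ → ℝ := fun x => ∫ t in Ioi (0:ℝ), f t * μ t ^ 1 * Real.exp (-x * μ t) with hF1def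
  set G1 : ℝ → ℝ := fun x => ∫ t in Ioi (0:ℝ), g t * μ t ^ 1 * Real.exp (-x * μ t) with hG1def
  set F2 : ℝ → ℝ := fun x => ∫ t in Ioi (0:ℝ), f t * μ t ^ 2 * Real.exp (-x * μ t) with hF2def
  set G2 : ℝ → ℝ := fun x => ∫ t in Ioi (0:ℝ), g t * μ t ^ 2 * Real.exp (-x * μ t) with hG2def
  set r : ℝ → ℝ := fun x => F1 x / G1 x with hrdef
  -- derivative of F and G
  have hFfun : (fun x => ∫ t in Ioi (0:ℝ), f t * μ t ^ 0 * Real.exp (-x * μ t)) = F := by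
    funext y
    rw [hF y]
    apply setIntegral_congr_fun measurableSet_Ioi
    intro t _; simp
  have hGfun : (fun x => ∫ t in Ioi (0:ℝ), g t * μ t ^ 0 * Real.exp (-x * μ t)) = G := by
    funext y
    rw [hG y]
    apply setIntegral_congr_fun measurableSet_Ioi
    intro t _; simp
  have hF' : ∀ x ∈ Ioi (0:ℝ), HasDerivAt F (-(F1 x)) x := by
    intro x hx
    have h0 := aux_DI hf hμc hμpos hfint 0 hx.out
    rw [hFfun] at h0
    exact h0
  have hG' : ∀ x ∈ Ioi (0:ℝ), HasDerivAt G (-(G1 x)) x := by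
    intro x hx
    have h0 := aux_DI hg hμc hμpos hgint 0 hx.out
    rw [hGfun] at h0
    exact h0
  have hF1' : ∀ x ∈ Ioi (0:ℝ), HasDerivAt F1 (-(F2 x)) x := by
    intro x hx
    have h0 := aux_DI hf hμc hμpos hfint 1 hx.out
    exact h0
  have hG1' : ∀ x ∈ Ioi (0:ℝ), HasDerivAt G1 (-(G2 x)) x := by
    intro x hx
    have h0 := aux_DI hg hμc hμpos hgint 1 hx.out
    exact h0
  -- positivity
  have hGpos : ∀ x ∈ Ioi (0:ℝ), 0 < G x := by
    intro x hx
    rw [hG x]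
    exact aux_pos hg hgpos hμc (hgint x hx.out)
  have hG1pos : ∀ x ∈ Ioi (0:ℝ), 0 < G1 x := by
    intro x hx
    apply aux_pos (hg.mul (hμc.pow 1)) ?_ hμc (aux_int' hg hμc hμpos hgint 1 hx.out)
    intro t ht
    have h1 := hgpos t ht
    have h2 := hμpos t ht
    show 0 < g t * μ t ^ 1
    positivity
  -- H in terms of r
  have hH : ∀ x ∈ Ioi (0:ℝ), deriv F x / deriv G x * G x - F x = r x * G x - F x := by
    intro x hx
    rw [(hF' x hx).deriv, (hG' x hx).deriv, neg_div_neg_eq]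
  -- ratio derivative
  have hR' : ∀ x ∈ Ioi (0:ℝ), HasDerivAt (fun y => F y / G y)
      ((-(F1 x) * G x - F x * -(G1 x)) / G x ^ 2) x := fun x hx =>
    (hF' x hx).div (hG' x hx) (hGpos x hx).ne'
  constructor
  · -- forward
    intro hmono
    apply ge_of_tendsto hL
    filter_upwards [self_mem_nhdsWithin] with x hx
    rw [hH x hx]
    have hdiff : Ioi x \ {x} = Ioi x := diff_singleton_eq_self (by simp)
    have hder := (hR' x hx).hasDerivWithinAt (s := Ioi x)
    rw [hasDerivWithinAt_iff_tendsto_slope, hdiff] at hder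
    have hev : ∀ᶠ y in 𝓝[>] x, slope (fun y => F y / G y) x y ≤ 0 := by
      filter_upwards [self_mem_nhdsWithin] with y hy
      rw [slope_def_field]
      have h1 : F y / G y ≤ F x / G x := hmono hx (lt_trans hx.out hy.out) (le_of_lt hy.out)
      rw [div_nonpos_iff]
      right
      constructor
      · simp only [sub_nonpos]
        exact h1
      · linarith [hy.out]
    have hd := le_of_tendsto hder hev
    -- hd : (-(F1 x) * G x - F x * -(G1 x)) / G x ^ 2 ≤ 0
    have hnum : -(F1 x) * G x - F x * -(G1 x) ≤ 0 := by
      rcases div_nonpos_iff.1 hd with ⟨h1, h2⟩ | ⟨h1, h2⟩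
      · nlinarith [pow_pos (hGpos x hx) 2]
      · exact h1
    have heq : r x * G x - F x = (F1 x * G x - F x * G1 x) / G1 x := by
      rw [hrdef]
      field_simp [(hG1pos x hx).ne']
    rw [heq]
    apply div_nonneg ?_ (hG1pos x hx).le
    linarith
  · -- backward
    intro hL0
    intro u hu v hv huv
    rcases eq_or_lt_of_le huv with rfl | huv'
    · exact le_refl _
    by_contra hcon
    push_neg at hcon
    -- quasi-concavity of r
    have qc : ∀ {p q s : ℝ}, 0 < p → p < q → q < s → min (r p) (r s) ≤ r q := by
      intro p q s hp hpq hqs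
      exact aux_qc hf hg hgpos hμpos hμc hμmono hμonto hfint hgint htstar hinc hdec hp hpq hqs
    -- MVT for R on [u,v]
    have hRcont : ContinuousOn (fun y => F y / G y) (Icc u v) := by
      intro y hy
      exact ((hR' y (mem_Ioi.2 (lt_of_lt_of_le hu.out hy.1))).continuousAt).continuousWithinAt
    obtain ⟨x₅, hx₅I, hx₅⟩ := exists_hasDerivAt_eq_slope (fun y => F y / G y)
      (fun y => (-(F1 y) * G y - F y * -(G1 y)) / G y ^ 2) huv' hRcont
      (fun y hy => hR' y (mem_Ioi.2 (lt_trans hu.out hy.1)))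
    have hx₅pos : 0 < x₅ := lt_trans hu.out hx₅I.1
    have hx₅mem : x₅ ∈ Ioi (0:ℝ) := hx₅pos
    have hx₅' : (-(F1 x₅) * G x₅ - F x₅ * -(G1 x₅)) / G x₅ ^ 2
        = (F v / G v - F u / G u) / (v - u) := hx₅
    have hslopepos : 0 < (-(F1 x₅) * G x₅ - F x₅ * -(G1 x₅)) / G x₅ ^ 2 := by
      rw [hx₅']
      exact div_pos (by linarith) (by linarith)
    have hnumpos : 0 < F x₅ * G1 x₅ - F1 x₅ * G x₅ := by
      rcases div_pos_iff.1 hslopepos with ⟨h1, _⟩ | ⟨_, h2⟩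
      · linarith
      · nlinarith [pow_pos (hGpos x₅ hx₅mem) 2]
    have hHneg : r x₅ * G x₅ - F x₅ < 0 := by
      have heq : r x₅ * G x₅ - F x₅ = (F1 x₅ * G x₅ - F x₅ * G1 x₅) / G1 x₅ := by
        rw [hrdef]
        field_simp [(hG1pos x₅ hx₅mem).ne']
      rw [heq]
      apply div_neg_of_neg_of_pos (by linarith) (hG1pos x₅ hx₅mem)
    -- find x' < x₅ with H x' > H x₅
    have hLgt : r x₅ * G x₅ - F x₅ < L := lt_of_lt_of_le hHneg hL0
    have hev1 : ∀ᶠ x in 𝓝[>] (0:ℝ),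
        r x₅ * G x₅ - F x₅ < deriv F x / deriv G x * G x - F x :=
      hL.eventually (eventually_gt_nhds hLgt)
    have hev2 : Ioo (0:ℝ) x₅ ∈ 𝓝[>] (0:ℝ) := Ioo_mem_nhdsGT_of_mem ⟨le_refl 0, hx₅pos⟩
    obtain ⟨x', hgt, hmem⟩ := (hev1.and (eventually_of_mem hev2 fun y hy => hy)).exists
    have hx'pos : 0 < x' := hmem.1
    have hx'mem : x' ∈ Ioi (0:ℝ) := hx'pos
    have hgt' : r x₅ * G x₅ - F x₅ < r x' * G x' - F x' := by
      rwa [hH x' hx'mem] at hgt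
    -- MVT for Hfun on [x', x₅]
    have hHder : ∀ y ∈ Ioi (0:ℝ), HasDerivAt (fun z => r z * G z - F z)
        (((-(F2 y) * G1 y - F1 y * -(G2 y)) / G1 y ^ 2 * G y + r y * -(G1 y)) - -(F1 y)) y := by
      intro y hy
      have hry : HasDerivAt r ((-(F2 y) * G1 y - F1 y * -(G2 y)) / G1 y ^ 2) y :=
        (hF1' y hy).div (hG1' y hy) (hG1pos y hy).ne'
      exact (hry.mul (hG' y hy)).sub (hF' y hy)
    have hHcont : ContinuousOn (fun z => r z * G z - F z) (Icc x' x₅) := by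
      intro y hy
      exact ((hHder y (mem_Ioi.2 (lt_of_lt_of_le hx'pos hy.1))).continuousAt).continuousWithinAt
    obtain ⟨x₃, hx₃I, hx₃⟩ := exists_hasDerivAt_eq_slope (fun z => r z * G z - F z)
      (fun y => ((-(F2 y) * G1 y - F1 y * -(G2 y)) / G1 y ^ 2 * G y + r y * -(G1 y)) - -(F1 y))
      hmem.2 hHcont (fun y hy => hHder y (mem_Ioi.2 (lt_trans hx'pos hy.1)))
    have hx₃pos : 0 < x₃ := lt_trans hx'pos hx₃I.1
    have hx₃mem : x₃ ∈ Ioi (0:ℝ) := hx₃pos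
    have hx₃' : ((-(F2 x₃) * G1 x₃ - F1 x₃ * -(G2 x₃)) / G1 x₃ ^ 2 * G x₃ + r x₃ * -(G1 x₃))
        - -(F1 x₃) = ((r x₅ * G x₅ - F x₅) - (r x' * G x' - F x')) / (x₅ - x') := hx₃
    have hslopeneg :
        ((-(F2 x₃) * G1 x₃ - F1 x₃ * -(G2 x₃)) / G1 x₃ ^ 2 * G x₃ + r x₃ * -(G1 x₃)) - -(F1 x₃)
          < 0 := by
      rw [hx₃']
      apply div_neg_of_neg_of_pos (by linarith) (by linarith [hmem.2])
    have hcancel : r x₃ * G1 x₃ = F1 x₃ := by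
      rw [hrdef]
      field_simp [(hG1pos x₃ hx₃mem).ne']
    set rd : ℝ → ℝ := fun y => (-(F2 y) * G1 y - F1 y * -(G2 y)) / G1 y ^ 2 with hrd
    have hrdneg : rd x₃ < 0 := by
      have h1 : rd x₃ * G x₃ < 0 := by
        have heq2 : rd x₃ * G x₃ = ((-(F2 x₃) * G1 x₃ - F1 x₃ * -(G2 x₃)) / G1 x₃ ^ 2 * G x₃
            + r x₃ * -(G1 x₃)) - -(F1 x₃) := by
          rw [hrd]
          linear_combination hcancel
        rw [heq2]; exact hslopeneg
      by_contra hc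
      push_neg at hc
      have h2 : 0 ≤ rd x₃ * G x₃ := mul_nonneg hc (hGpos x₃ hx₃mem).le
      linarith
    -- find y₀ ∈ (x₃, x₅) with r y₀ < r x₃
    have hrder : HasDerivAt r (rd x₃) x₃ :=
      (hF1' x₃ hx₃mem).div (hG1' x₃ hx₃mem) (hG1pos x₃ hx₃mem).ne'
    have hslope2 : Tendsto (slope r x₃) (𝓝[>] x₃) (𝓝 (rd x₃)) := by
      have := hasDerivAt_iff_tendsto_slope.1 hrder
      exact this.mono_left (nhdsWithin_mono _ fun y hy => ne_of_gt hy)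
    have hev3 : ∀ᶠ y in 𝓝[>] x₃, slope r x₃ y < 0 :=
      hslope2.eventually (eventually_lt_nhds hrdneg)
    have hev4 : Ioo x₃ x₅ ∈ 𝓝[>] x₃ := Ioo_mem_nhdsGT_of_mem ⟨le_refl _, hx₃I.2⟩
    obtain ⟨y₀, hsl, hy₀mem⟩ := (hev3.and (eventually_of_mem hev4 fun y hy => hy)).exists
    have hy₀pos : 0 < y₀ := lt_trans hx₃pos hy₀mem.1
    have hry₀ : r y₀ < r x₃ := by
      rw [slope_def_field] at hsl
      rcases div_neg_iff.1 hsl with ⟨_, h2⟩ | ⟨h1, _⟩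
      · linarith [hy₀mem.1]
      · linarith
    -- r is antitone on [y₀, ∞)
    have step1 : ∀ w, y₀ < w → r w ≤ r y₀ := by
      intro w hw
      have hqc := qc hx₃pos hy₀mem.1 hw
      rcases le_total (r x₃) (r w) with hc | hc
      · rw [min_eq_left hc] at hqc; linarith
      · rw [min_eq_right hc] at hqc; exact hqc
    have step2 : ∀ z₁ z₂, y₀ ≤ z₁ → z₁ < z₂ → r z₂ ≤ r z₁ := by
      intro z₁ z₂ h1 h2
      rcases eq_or_lt_of_le h1 with rfl | h1'
      · exact step1 z₂ h2
      · have hqc := qc hy₀pos h1' h2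
        rw [min_eq_right (step1 z₂ (lt_trans h1' h2))] at hqc
        exact hqc
    -- G is strictly decreasing
    have hGdec : ∀ p q : ℝ, 0 < p → p < q → G q < G p := by
      intro p q hp hpq
      have hGcont : ContinuousOn G (Icc p q) := fun y hy =>
        ((hG' y (mem_Ioi.2 (lt_of_lt_of_le hp hy.1))).continuousAt).continuousWithinAt
      obtain ⟨c, hcI, hc⟩ := exists_hasDerivAt_eq_slope G (fun y => -(G1 y)) hpq hGcont
        (fun y hy => hG' y (mem_Ioi.2 (lt_trans hp hy.1)))
      have hcpos : 0 < c := lt_trans hp hcI.1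
      have h2 : G q - G p = -(G1 c) * (q - p) := by
        rw [hc]
        rw [div_mul_cancel₀]
        exact (sub_pos.2 hpq).ne'
      nlinarith [hG1pos c (mem_Ioi.2 hcpos)]
    -- Cauchy MVT key inequality
    have hkey : ∀ z, x₅ < z → F x₅ - F z ≤ r x₅ * (G x₅ - G z) := by
      intro z hz
      have hz0 : 0 < z := lt_trans hx₅pos hz
      have hFcont : ContinuousOn F (Icc x₅ z) := fun y hy =>
        ((hF' y (mem_Ioi.2 (lt_of_lt_of_le hx₅pos hy.1))).continuousAt).continuousWithinAt
      have hGcont : ContinuousOn G (Icc x₅ z) := fun y hy =>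
        ((hG' y (mem_Ioi.2 (lt_of_lt_of_le hx₅pos hy.1))).continuousAt).continuousWithinAt
      obtain ⟨c, hcI, hc⟩ := exists_ratio_hasDerivAt_eq_ratio_slope F (fun y => -(F1 y)) hz
        hFcont (fun y hy => hF' y (mem_Ioi.2 (lt_trans hx₅pos hy.1)))
        G (fun y => -(G1 y)) hGcont (fun y hy => hG' y (mem_Ioi.2 (lt_trans hx₅pos hy.1)))
      have hcpos : 0 < c := lt_trans hx₅pos hcI.1
      have hcmem : c ∈ Ioi (0:ℝ) := hcpos
      have h3 : (G x₅ - G z) * F1 c = (F x₅ - F z) * G1 c := by linear_combination hc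
      have e1 : F x₅ - F z = r c * (G x₅ - G z) := by
        rw [hrdef]
        rw [div_mul_eq_mul_div, eq_div_iff (hG1pos c hcmem).ne']
        linear_combination -h3
      have hrc : r c ≤ r x₅ := step2 x₅ c hy₀mem.2.le hcI.1
      calc F x₅ - F z = r c * (G x₅ - G z) := e1
        _ ≤ r x₅ * (G x₅ - G z) :=
            mul_le_mul_of_nonneg_right hrc (sub_pos.2 (hGdec x₅ z hx₅pos hz)).le
    -- limits at infinity
    have hFtends : Tendsto F atTop (𝓝 0) := by
      have hFfun2 : F = fun x => ∫ t in Ioi (0:ℝ), f t * Real.exp (-x * μ t) := funext hF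
      rw [hFfun2]
      exact aux_tendsto_zero hf hμc hμpos hfint
    have hGtends : Tendsto G atTop (𝓝 0) := by
      have hGfun2 : G = fun x => ∫ t in Ioi (0:ℝ), g t * Real.exp (-x * μ t) := funext hG
      rw [hGfun2]
      exact aux_tendsto_zero hg hμc hμpos hgint
    have hseq : Tendsto (fun n : ℕ => x₅ + 1 + (n:ℝ)) atTop atTop :=
      tendsto_atTop_add_const_left _ _ tendsto_natCast_atTop_atTop
    have hFz : Tendsto (fun n : ℕ => F x₅ - F (x₅ + 1 + (n:ℝ))) atTop (𝓝 (F x₅ - 0)) :=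
      tendsto_const_nhds.sub (hFtends.comp hseq)
    have hGz : Tendsto (fun n : ℕ => r x₅ * (G x₅ - G (x₅ + 1 + (n:ℝ)))) atTop
        (𝓝 (r x₅ * (G x₅ - 0))) :=
      ((tendsto_const_nhds.sub (hGtends.comp hseq)).const_mul (r x₅))
    have hfinal : F x₅ - 0 ≤ r x₅ * (G x₅ - 0) := by
      apply le_of_tendsto_of_tendsto' hFz hGz
      intro n
      apply hkey
      have hn : (0:ℝ) ≤ (n:ℝ) := Nat.cast_nonneg n
      linarith
    rw [sub_zero, sub_zero] at hfinal
    linarith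
end
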